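/- arXiv:2207.11273 — 9 statements merged into one kernel-verified Lean document; each statement's English description precedes it below -/
import Mathlib

section
/- Let n ≥ 2 and let w be a word of length n using exactly two letters such that w_i ≠ w_{n-i+1} for all i. Then for every positive integer d, f(w,d) = (1/4)((n+2)^d − (n−2)^d). -/
namespace WordGridHD

variable {α : Type*}

/-- `(p; v)` is the canonical pair of a line in the grid `[n]^d`: all entries of `v` lie in
`{-1, 0, +1}`, the first nonzero entry of `v` is `+1`, and all the points
`p, p + v, …, p + (n-1)v` have all coordinates in `[n] = {1, …, n}`. -/
def IsCanonLine (n d : ℕ) (p v : Fin d → ℤ) : Prop :=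
  (∀ j, v j = -1 ∨ v j = 0 ∨ v j = 1) ∧
  (∃ j, v j = 1 ∧ ∀ j' < j, v j' = 0) ∧
  (∀ i : ℕ, i < n → ∀ j, 1 ≤ p j + i * v j ∧ p j + i * v j ≤ n)

/-- The line with canonical pair `(p; v)` contains the word `w` (forwards or backwards)
in the grid `G`. -/
def lineC {n d : ℕ} (w : Fin n → α) (G : (Fin d → ℤ) → α) (p v : Fin d → ℤ) : Prop :=
  (∀ i : Fin n, G (fun j => p j + (i : ℕ) * v j) = w i) ∨
  (∀ i : Fin n, G (fun j => p j + (i : ℕ) * v j) = w i.rev)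

/-- `f(w,G)`: the number of lines of `[n]^d` containing `w` in the grid `G`. -/
noncomputable def count {n : ℕ} (d : ℕ) (w : Fin n → α) (G : (Fin d → ℤ) → α) : ℕ :=
  {pv : (Fin d → ℤ) × (Fin d → ℤ) |
    IsCanonLine n d pv.1 pv.2 ∧ lineC w G pv.1 pv.2}.ncard

/-- `f(w,d)`: the maximum of `f(w,G)` over all `(n,d)`-grids `G`. -/
noncomputable def fword {n : ℕ} (w : Fin n → α) (d : ℕ) : ℕ :=
  sSup {m | ∃ G : (Fin d → ℤ) → α, count d w G = m}

open Finset

lemma sum_pow_cnt {κ : Type*} [Fintype κ] {R : Type*} [CommSemiring R]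
    (p : κ → Prop) [DecidablePred p] (u : R) (d : ℕ) :
    ∑ f : Fin d → κ, u ^ (Finset.univ.filter (fun j => p (f j))).card
      = (∑ c : κ, if p c then u else 1) ^ d := by
  classical
  have key : ∀ f : Fin d → κ,
      u ^ (Finset.univ.filter (fun j => p (f j))).card
        = ∏ j : Fin d, (if p (f j) then u else 1) := by
    intro f
    rw [← Finset.prod_filter_mul_prod_filter_not Finset.univ (fun j => p (f j))]
    rw [Finset.prod_congr rfl (fun x hx => if_pos (Finset.mem_filter.1 hx).2),
        Finset.prod_eq_one (fun x hx => if_neg (Finset.mem_filter.1 hx).2),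
        Finset.prod_const, mul_one]
  simp_rw [key]
  conv_lhs => rw [← Fintype.piFinset_univ]
  rw [← Fin.prod_const d (∑ c : κ, if p c then u else (1:R)), Finset.prod_univ_sum]

def PosDir (d : ℕ) (v : Fin d → ℤ) : Prop := ∃ j, v j = 1 ∧ ∀ j' < j, v j' = 0

lemma pos_unique {d : ℕ} {v : Fin d → ℤ} (h1 : PosDir d v) (h2 : PosDir d (fun j => -v j)) :
    False := by
  obtain ⟨j₁, hj₁, hj₁'⟩ := h1
  obtain ⟨j₂, hj₂, hj₂'⟩ := h2
  rcases lt_trichotomy j₁ j₂ with h | h | h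
  · have := hj₂' j₁ h; simp only [neg_eq_zero] at this; omega
  · subst h; simp only [] at hj₂; omega
  · have := hj₁' j₂ h; simp only [] at hj₂; omega

lemma pos_or_neg {d : ℕ} {v : Fin d → ℤ} (hent : ∀ j, v j = -1 ∨ v j = 0 ∨ v j = 1)
    (hnz : ∃ j, v j ≠ 0) : PosDir d v ∨ PosDir d (fun j => -v j) := by
  classical
  obtain ⟨j, hj⟩ := hnz
  set F : Finset (Fin d) := Finset.univ.filter (fun j => v j ≠ 0) with hF
  have hFne : F.Nonempty := ⟨j, by simp [hF, hj]⟩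
  set j₀ := F.min' hFne with hj₀
  have hj₀mem : j₀ ∈ F := F.min'_mem hFne
  have hj₀nz : v j₀ ≠ 0 := by simpa [hF] using hj₀mem
  have hmin : ∀ j' < j₀, v j' = 0 := by
    intro j' hj'
    by_contra hne
    have : j₀ ≤ j' := F.min'_le j' (by simp [hF, hne])
    omega
  rcases hent j₀ with h | h | h
  · right; exact ⟨j₀, by simp [h], fun j' hj' => by simp [hmin j' hj']⟩
  · exact absurd h hj₀nz
  · left; exact ⟨j₀, h, hmin⟩

open Classical in
noncomputable def SF {n : ℕ} (d : ℕ) (w : Fin n → α) (G : (Fin d → ℤ) → α) :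
    Finset ((Fin d → ℤ) × (Fin d → ℤ)) :=
  ((Fintype.piFinset (fun _ : Fin d => Finset.Icc (1:ℤ) n)) ×ˢ
    (Fintype.piFinset (fun _ : Fin d => Finset.Icc (-1:ℤ) 1))).filter
    (fun pv => IsCanonLine n d pv.1 pv.2 ∧ lineC w G pv.1 pv.2)

lemma count_eq_SF_card {n : ℕ} (hn : 1 ≤ n) (d : ℕ) (w : Fin n → α)
    (G : (Fin d → ℤ) → α) : count d w G = (SF d w G).card := by
  classical
  rw [count, ← Set.ncard_coe_finset]
  congr 1
  ext pv
  simp only [SF, Finset.coe_filter, Set.mem_setOf_eq, Finset.mem_product,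
    Fintype.mem_piFinset, Finset.mem_Icc]
  constructor
  · rintro ⟨hc, hl⟩
    refine ⟨⟨fun j => ?_, fun j => ?_⟩, hc, hl⟩
    · have h0 := hc.2.2 0 (by omega) j
      simpa using h0
    · rcases hc.1 j with h | h | h <;> simp [h]
  · rintro ⟨-, hc, hl⟩
    exact ⟨hc, hl⟩

/-- Endpoint values of a line that fits in the box. -/
lemma bnd_facts {n d : ℕ} (hn : 2 ≤ n) {p v : Fin d → ℤ}
    (hbnd : ∀ i : ℕ, i < n → ∀ j, 1 ≤ p j + i * v j ∧ p j + i * v j ≤ n) (j : Fin d) :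
    (v j = 1 → p j = 1) ∧ (v j = -1 → p j = (n:ℤ)) ∧ (1 ≤ p j ∧ p j ≤ n) := by
  have h0 := hbnd 0 (by omega) j
  have hN := hbnd (n-1) (by omega) j
  simp only [Nat.cast_zero, zero_mul, add_zero] at h0
  have hc : ((n-1:ℕ):ℤ) = (n:ℤ) - 1 := by omega
  rw [hc] at hN
  refine ⟨fun h => ?_, fun h => ?_, h0⟩
  · rw [h, mul_one] at hN; omega
  · rw [h, mul_neg_one] at hN; omega

lemma lower_bound {n : ℕ} (hn : 2 ≤ n) (w : Fin n → α) (A M : α) (hAM : A ≠ M)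
    (htwo : ∀ i, w i = A ∨ w i = M) (hanti : ∀ i, w i ≠ w i.rev) (d : ℕ) :
    ∃ G : (Fin d → ℤ) → α, (n + 2) ^ d ≤ 4 * count d w G + (n - 2) ^ d := by
  classical
  have hrevM : ∀ i : Fin n, (w i.rev = M ↔ ¬ (w i = M)) := by
    intro i
    constructor
    · intro hM hM'; exact hanti i (hM'.trans hM.symm)
    · intro hne
      rcases htwo i.rev with h' | h'
      · rcases htwo i with h | h
        · exact absurd (h.trans h'.symm) (hanti i)
        · exact absurd h hne
      · exact h'
  have hA : ∀ i : Fin n, ¬ (w i = M) → w i = A := by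
    intro i h; rcases htwo i with h' | h' <;> tauto
  set bz : ℤ → Prop := fun t => ∃ i : Fin n, ((i : ℕ) : ℤ) + 1 = t ∧ w i = M with hbzdef
  have hbz1 : ∀ i : Fin n, bz (((i : ℕ) : ℤ) + 1) ↔ w i = M := by
    intro i
    constructor
    · rintro ⟨i', hi', hw⟩
      have hval : ((i' : ℕ) : ℤ) = ((i : ℕ) : ℤ) := by omega
      have : i' = i := Fin.ext (by exact_mod_cast hval)
      rwa [this] at hw
    · intro h; exact ⟨i, rfl, h⟩
  set G : (Fin d → ℤ) → α := fun x =>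
    if Even (Finset.univ.filter (fun j => bz (x j))).card then A else M with hGdef
  refine ⟨G, ?_⟩
  -- every odd-support canonical line contains w in G
  have lineOdd : ∀ p v : Fin d → ℤ, IsCanonLine n d p v →
      Odd (Finset.univ.filter (fun j => v j ≠ 0)).card → lineC w G p v := by
    intro p v hc hodd
    obtain ⟨hent, hpos, hbnd⟩ := hc
    have hval : ∀ (i : Fin n) (j : Fin d),
        bz (p j + ((i : ℕ) : ℤ) * v j) ↔
          ((v j = 1 ∧ w i = M) ∨ (v j = -1 ∧ ¬ (w i = M)) ∨ (v j = 0 ∧ bz (p j))) := by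
      intro i j
      rcases hent j with h | h | h
      · have hcoord : p j + ((i : ℕ) : ℤ) * v j = ((i.rev : ℕ) : ℤ) + 1 := by
          rw [h, (bnd_facts hn hbnd j).2.1 h, mul_neg_one]
          have hrv : (i.rev : ℕ) = n - ((i : ℕ) + 1) := Fin.val_rev i
          have hi := i.isLt
          omega
        rw [hcoord, hbz1 i.rev, hrevM i]
        simp [h]
      · have hcoord : p j + ((i:ℕ):ℤ) * v j = p j := by rw [h]; ring
        rw [hcoord]
        simp [h]
      · have hcoord : p j + ((i:ℕ):ℤ) * v j = ((i : ℕ) : ℤ) + 1 := by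
          rw [h, (bnd_facts hn hbnd j).1 h]; ring
        rw [hcoord, hbz1 i]
        simp [h]
    set s1 := (Finset.univ.filter (fun j => v j = 1)).card with hs1
    set s2 := (Finset.univ.filter (fun j => v j = -1)).card with hs2
    set c0 := (Finset.univ.filter (fun j => v j = 0 ∧ bz (p j))).card with hc0
    have hcnt : ∀ i : Fin n,
        (Finset.univ.filter (fun j => bz (p j + ((i:ℕ):ℤ) * v j))).card
          = (if w i = M then s1 else s2) + c0 := by
      intro i
      by_cases hwi : w i = M
      · have hset : Finset.univ.filter (fun j => bz (p j + ((i:ℕ):ℤ) * v j))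
            = Finset.univ.filter (fun j => v j = 1 ∨ (v j = 0 ∧ bz (p j))) := by
          ext j
          simp only [Finset.mem_filter, Finset.mem_univ, true_and, hval i j, hwi]
          tauto
        rw [hset, if_pos hwi, Finset.filter_or, Finset.card_union_of_disjoint]
        simp only [Finset.disjoint_left, Finset.mem_filter, Finset.mem_univ, true_and]
        rintro x h1 ⟨h2, -⟩
        omega
      · have hset : Finset.univ.filter (fun j => bz (p j + ((i:ℕ):ℤ) * v j))
            = Finset.univ.filter (fun j => v j = -1 ∨ (v j = 0 ∧ bz (p j))) := by
          ext j
          simp only [Finset.mem_filter, Finset.mem_univ, true_and, hval i j, hwi]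
          tauto
        rw [hset, if_neg hwi, Finset.filter_or, Finset.card_union_of_disjoint]
        simp only [Finset.disjoint_left, Finset.mem_filter, Finset.mem_univ, true_and]
        rintro x h1 ⟨h2, -⟩
        omega
    have hs12 : (s1 + s2) % 2 = 1 := by
      have hsplit : Finset.univ.filter (fun j => v j ≠ 0)
          = Finset.univ.filter (fun j => v j = 1) ∪ Finset.univ.filter (fun j => v j = -1) := by
        ext j
        simp only [Finset.mem_filter, Finset.mem_union, Finset.mem_univ, true_and]
        rcases hent j with h|h|h <;> simp [h]
      rw [hsplit, Finset.card_union_of_disjoint] at hodd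
      · exact Nat.odd_iff.1 hodd
      · simp only [Finset.disjoint_left, Finset.mem_filter, Finset.mem_univ, true_and]
        rintro x h1 h2
        omega
    have hGx : ∀ i : Fin n, G (fun j => p j + ((i:ℕ):ℤ) * v j)
        = if Even ((if w i = M then s1 else s2) + c0) then A else M := by
      intro i
      rw [hGdef]
      simp only []
      rw [hcnt i]
    by_cases hE : (s1 + c0) % 2 = 0
    · right
      intro i
      rw [hGx i]
      by_cases hwi : w i = M
      · rw [if_pos hwi, if_pos (Nat.even_iff.2 hE)]
        rcases htwo i.rev with h' | h'
        · exact h'.symm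
        · exact absurd hwi ((hrevM i).1 h')
      · rw [if_neg hwi, if_neg (by rw [Nat.even_iff]; omega)]
        exact ((hrevM i).2 hwi).symm
    · left
      intro i
      rw [hGx i]
      by_cases hwi : w i = M
      · rw [if_pos hwi, if_neg (by rw [Nat.even_iff]; omega)]
        exact hwi.symm
      · rw [if_neg hwi, if_pos (by rw [Nat.even_iff]; omega)]
        exact (hA i hwi).symm
  -- Finsets of lines
  set P : Finset ((Fin d → ℤ) × (Fin d → ℤ)) :=
    ((Fintype.piFinset (fun _ : Fin d => Finset.Icc (1:ℤ) n)) ×ˢ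
      (Fintype.piFinset (fun _ : Fin d => Finset.Icc (-1:ℤ) 1))) with hP
  set Lall : Finset ((Fin d → ℤ) × (Fin d → ℤ)) := P.filter (fun pv =>
      (∀ j, pv.2 j = -1 ∨ pv.2 j = 0 ∨ pv.2 j = 1) ∧
      (∀ i : ℕ, i < n → ∀ j, 1 ≤ pv.1 j + i * pv.2 j ∧ pv.1 j + i * pv.2 j ≤ n) ∧
      (∃ j, pv.2 j ≠ 0) ∧
      Odd (Finset.univ.filter (fun j => pv.2 j ≠ 0)).card) with hLall
  set Lcan : Finset ((Fin d → ℤ) × (Fin d → ℤ)) :=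
    Lall.filter (fun pv => PosDir d pv.2) with hLcan
  -- canonical odd lines are counted by `count`
  have hsub : Lcan ⊆ SF d w G := by
    intro pv hpv
    rw [hLcan, Finset.mem_filter] at hpv
    obtain ⟨hall, hposd⟩ := hpv
    rw [hLall, Finset.mem_filter] at hall
    obtain ⟨hbox, hent, hbnd, hnz, hodd⟩ := hall
    have hcanon : IsCanonLine n d pv.1 pv.2 := ⟨hent, hposd, hbnd⟩
    rw [SF, Finset.mem_filter]
    exact ⟨hbox, hcanon, lineOdd pv.1 pv.2 hcanon hodd⟩
  -- the flipping involution halves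
  have hσ : ∀ pv : (Fin d → ℤ) × (Fin d → ℤ), pv ∈ Lall →
      ((fun j => pv.1 j + ((n:ℤ)-1) * pv.2 j, fun j => -pv.2 j) :
        (Fin d → ℤ) × (Fin d → ℤ)) ∈ Lall := by
    intro pv hpv
    rw [hLall, Finset.mem_filter] at hpv ⊢
    obtain ⟨hbox, hent, hbnd, hnz, hodd⟩ := hpv
    have hbnd' : ∀ i : ℕ, i < n → ∀ j,
        1 ≤ (pv.1 j + ((n:ℤ)-1) * pv.2 j) + (i:ℤ) * (-(pv.2 j)) ∧
          (pv.1 j + ((n:ℤ)-1) * pv.2 j) + (i:ℤ) * (-(pv.2 j)) ≤ n := by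
      intro i hi j
      have hb := hbnd (n-1-i) (by omega) j
      have hcast : ((n-1-i:ℕ):ℤ) = (n:ℤ)-1-(i:ℕ) := by omega
      rw [hcast] at hb
      have hring : (pv.1 j + ((n:ℤ)-1) * pv.2 j) + (i:ℤ) * (-(pv.2 j))
          = pv.1 j + ((n:ℤ)-1-(i:ℤ)) * pv.2 j := by ring
      rw [hring]
      exact hb
    refine ⟨?_, fun j => ?_, hbnd', ?_, ?_⟩
    · rw [hP, Finset.mem_product] at hbox ⊢
      refine ⟨?_, ?_⟩
      · rw [Fintype.mem_piFinset]
        intro j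
        have h0 := hbnd' 0 (by omega) j
        simp only [Nat.cast_zero, zero_mul, add_zero] at h0
        simpa [Finset.mem_Icc] using h0
      · rw [Fintype.mem_piFinset]
        intro j
        simp only [Finset.mem_Icc]
        rcases hent j with h|h|h <;> simp [h]
    · rcases hent j with h|h|h <;> simp [h]
    · obtain ⟨j, hj⟩ := hnz
      exact ⟨j, by simpa using hj⟩
    · simpa [ne_eq, neg_eq_zero] using hodd
  have hflip : Lcan.card = (Lall.filter (fun pv => ¬ PosDir d pv.2)).card := by
    rw [hLcan]
    refine Finset.card_bij'
      (fun pv _ => ((fun j => pv.1 j + ((n:ℤ)-1) * pv.2 j, fun j => -pv.2 j) :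
        (Fin d → ℤ) × (Fin d → ℤ)))
      (fun pv _ => ((fun j => pv.1 j + ((n:ℤ)-1) * pv.2 j, fun j => -pv.2 j) :
        (Fin d → ℤ) × (Fin d → ℤ))) ?_ ?_ ?_ ?_
    · intro pv hpv
      rw [Finset.mem_filter] at hpv ⊢
      refine ⟨hσ pv hpv.1, fun hpos' => pos_unique hpv.2 hpos'⟩
    · intro pv hpv
      rw [Finset.mem_filter] at hpv ⊢
      obtain ⟨hall, hnpos⟩ := hpv
      have hall' := hall
      rw [hLall, Finset.mem_filter] at hall'
      have hposneg := pos_or_neg hall'.2.1 hall'.2.2.2.1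
      refine ⟨hσ pv hall, ?_⟩
      rcases hposneg with h | h
      · exact absurd h hnpos
      · exact h
    · intro pv _
      refine Prod.ext (funext fun j => ?_) (funext fun j => ?_)
      · simp only []; ring
      · simp only [neg_neg]
    · intro pv _
      refine Prod.ext (funext fun j => ?_) (funext fun j => ?_)
      · simp only []; ring
      · simp only [neg_neg]
  have hhalf : Lall.card = 2 * Lcan.card := by
    have h1 := Finset.card_filter_add_card_filter_not
      (s := Lall) (p := fun pv => PosDir d pv.2)
    have h2 : Lcan.card = (Lall.filter (fun pv => PosDir d pv.2)).card := by rw [hLcan]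
    omega
  -- bijection with parity-marked functions
  set Fodd : Finset (Fin d → Bool ⊕ Fin n) :=
    Finset.univ.filter
      (fun f => Odd (Finset.univ.filter (fun j => (f j).isLeft = true)).card) with hFodd
  have hcard2 : Fodd.card = Lall.card := by
    refine Finset.card_bij'
      (fun f _ => ((fun j => Sum.elim (fun b : Bool => if b then 1 else (n:ℤ))
          (fun k : Fin n => ((k:ℕ):ℤ)+1) (f j),
        fun j => Sum.elim (fun b : Bool => if b then (1:ℤ) else -1)
          (fun _ : Fin n => (0:ℤ)) (f j)) :
          (Fin d → ℤ) × (Fin d → ℤ)))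
      (fun pv _ => (fun j => if pv.2 j = 1 then Sum.inl true else if pv.2 j = -1 then Sum.inl false
        else Sum.inr (⟨(pv.1 j - 1).toNat % n, Nat.mod_lt _ (by omega)⟩ : Fin n))) ?_ ?_ ?_ ?_
    · intro f hf
      rw [hFodd, Finset.mem_filter] at hf
      have hfilter : Finset.univ.filter
            (fun j => Sum.elim (fun b : Bool => if b then (1:ℤ) else -1)
              (fun _ : Fin n => (0:ℤ)) (f j) ≠ 0)
          = Finset.univ.filter (fun j => (f j).isLeft = true) := by
        ext j
        rcases hfj : f j with b | k
        · rcases b <;> simp [hfj]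
        · simp [hfj]
      rw [hLall, Finset.mem_filter]
      refine ⟨?_, fun j => ?_, ?_, ?_, ?_⟩
      · rw [hP, Finset.mem_product]
        constructor
        · rw [Fintype.mem_piFinset]
          intro j
          simp only [Finset.mem_Icc]
          rcases hfj : f j with b | k
          · rcases b <;> simp [hfj] <;> omega
          · have hk := k.isLt
            simp [hfj]
        · rw [Fintype.mem_piFinset]
          intro j
          simp only [Finset.mem_Icc]
          rcases hfj : f j with b | k
          · rcases b <;> simp [hfj] <;> omega
          · simp [hfj] <;> omega
      · rcases hfj : f j with b | k
        · rcases b <;> simp [hfj]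
        · simp [hfj]
      · intro i hi j
        rcases hfj : f j with b | k
        · rcases b <;> simp [hfj] <;> omega
        · have hk := k.isLt
          simp [hfj]
      · have hpos : 0 < (Finset.univ.filter (fun j => (f j).isLeft = true)).card := by
          rcases hf.2 with ⟨r, hr⟩; omega
        obtain ⟨j, hj⟩ := Finset.card_pos.mp hpos
        rw [Finset.mem_filter] at hj
        refine ⟨j, ?_⟩
        rcases hfj : f j with b | k
        · rcases b <;> simp [hfj]
        · rw [hfj] at hj
          simp at hj
      · rw [hfilter]
        exact hf.2
    · intro pv hpv
      rw [hLall, Finset.mem_filter] at hpv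
      obtain ⟨hbox, hent, hbnd, hnz, hodd⟩ := hpv
      rw [hFodd, Finset.mem_filter]
      refine ⟨Finset.mem_univ _, ?_⟩
      have hfilter : Finset.univ.filter (fun j =>
            ((if pv.2 j = 1 then Sum.inl true else if pv.2 j = -1 then Sum.inl false
              else Sum.inr (⟨(pv.1 j - 1).toNat % n, Nat.mod_lt _ (by omega)⟩ : Fin n)) :
                Bool ⊕ Fin n).isLeft = true)
          = Finset.univ.filter (fun j => pv.2 j ≠ 0) := by
        ext j
        rcases hent j with h|h|h <;> simp [h]
      rw [hfilter]
      exact hodd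
    · intro f hf
      funext j
      rcases hfj : f j with b | k
      · rcases b <;> simp [hfj]
      · simp only [hfj, Sum.elim_inr]
        rw [if_neg (by omega), if_neg (by omega)]
        have hk := k.isLt
        refine congrArg Sum.inr (Fin.ext ?_)
        simp only []
        have h1 : ((((k:ℕ):ℤ) + 1 - 1).toNat) = (k:ℕ) := by omega
        rw [h1]
        exact Nat.mod_eq_of_lt hk
    · intro pv hpv
      rw [hLall, Finset.mem_filter] at hpv
      obtain ⟨hbox, hent, hbnd, hnz, hodd⟩ := hpv
      refine Prod.ext (funext fun j => ?_) (funext fun j => ?_)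
      · have hb := bnd_facts hn hbnd j
        simp only []
        rcases hent j with h|h|h
        · rw [if_neg (by omega), if_pos h]
          simp [hb.2.1 h]
        · rw [if_neg (by omega), if_neg (by omega)]
          simp only [Sum.elim_inr]
          have hpj := hb.2.2
          have hlt : (pv.1 j - 1).toNat < n := by omega
          rw [Nat.mod_eq_of_lt hlt]
          omega
        · rw [if_pos h]
          simp [hb.1 h]
      · simp only []
        rcases hent j with h|h|h
        · rw [if_neg (by omega), if_pos h]
          simp [h]
        · rw [if_neg (by omega), if_neg (by omega)]
          simp [h]
        · rw [if_pos h]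
          simp [h]
  -- the transfer-matrix count
  have hZ : ((n:ℤ)+2)^d = 2 * (Fodd.card : ℤ) + ((n:ℤ)-2)^d := by
    have h1 := sum_pow_cnt (κ := Bool ⊕ Fin n)
      (fun c => c.isLeft = true) (-1 : ℤ) d
    have h2 := sum_pow_cnt (κ := Bool ⊕ Fin n)
      (fun c => c.isLeft = true) (1 : ℤ) d
    have e1 : (∑ c : Bool ⊕ Fin n, if c.isLeft = true then (-1:ℤ) else 1) = (n:ℤ) - 2 := by
      rw [Fintype.sum_sum_type]
      simp
      ring
    have e2 : (∑ c : Bool ⊕ Fin n, if c.isLeft = true then (1:ℤ) else 1) = (n:ℤ) + 2 := by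
      rw [Fintype.sum_sum_type]
      simp
      ring
    rw [e1] at h1
    rw [e2] at h2
    have h3 : ∑ f : Fin d → Bool ⊕ Fin n,
        ((1:ℤ)^((Finset.univ.filter (fun j => (f j).isLeft = true)).card)
          - (-1:ℤ)^((Finset.univ.filter (fun j => (f j).isLeft = true)).card))
        = ((n:ℤ)+2)^d - ((n:ℤ)-2)^d := by
      rw [Finset.sum_sub_distrib, h2, h1]
    have h4 : ∀ f : Fin d → Bool ⊕ Fin n,
        ((1:ℤ)^((Finset.univ.filter (fun j => (f j).isLeft = true)).card)
          - (-1:ℤ)^((Finset.univ.filter (fun j => (f j).isLeft = true)).card))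
        = if Odd ((Finset.univ.filter (fun j => (f j).isLeft = true)).card) then 2 else 0 := by
      intro f
      rcases Nat.even_or_odd ((Finset.univ.filter (fun j => (f j).isLeft = true)).card) with h | h
      · rw [h.neg_one_pow, if_neg (Nat.not_odd_iff_even.mpr h)]
        simp
      · rw [h.neg_one_pow, if_pos h]
        simp
    rw [Finset.sum_congr rfl (fun f _ => h4 f), Finset.sum_ite, Finset.sum_const,
      Finset.sum_const_zero, add_zero] at h3
    rw [hFodd]
    have : ((Finset.univ.filter (fun f : Fin d → Bool ⊕ Fin n =>
        Odd ((Finset.univ.filter (fun j => (f j).isLeft = true)).card))).card : ℤ) • (2:ℤ)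
        = ((n:ℤ)+2)^d - ((n:ℤ)-2)^d := by
      rw [← h3]
      simp [nsmul_eq_mul]
    rw [smul_eq_mul] at this
    linarith [this]
  -- put everything together
  have hcount : count d w G = (SF d w G).card := count_eq_SF_card (by omega) d w G
  have hge : Lcan.card ≤ count d w G := by
    rw [hcount]
    exact Finset.card_le_card hsub
  have hfinal : (n+2)^d = 4 * Lcan.card + (n-2)^d := by
    have hcast : ((n-2:ℕ):ℤ) = (n:ℤ)-2 := by omega
    have : ((n:ℤ)+2)^d = 4 * (Lcan.card : ℤ) + ((n:ℤ)-2)^d := by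
      rw [hZ, hcard2, hhalf]
      push_cast
      ring
    rw [← hcast] at this
    exact_mod_cast this
  omega

noncomputable def keyFn (n d : ℕ) : ((Fin d → ℤ) × (Fin d → ℤ)) → (Fin d → Option (Fin (n-2))) :=
  open Classical in
  fun ab j => if h : ab.1 j = ab.2 j ∧ 2 ≤ ab.1 j ∧ ab.1 j ≤ (n:ℤ) - 1
    then some ⟨(ab.1 j - 2).toNat, by omega⟩ else none

lemma keyFn_def {n d : ℕ} (ab : (Fin d → ℤ) × (Fin d → ℤ)) (j : Fin d) :
    keyFn n d ab j = if h : ab.1 j = ab.2 j ∧ 2 ≤ ab.1 j ∧ ab.1 j ≤ (n:ℤ) - 1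
      then some (⟨(ab.1 j - 2).toNat, by omega⟩ : Fin (n-2)) else none := by
  classical
  rw [keyFn]

lemma upper_bound {n : ℕ} (hn : 2 ≤ n) (w : Fin n → α) (hanti : ∀ i, w i ≠ w i.rev)
    (d : ℕ) (G : (Fin d → ℤ) → α) :
    4 * count d w G + (n - 2) ^ d ≤ (n + 2) ^ d := by
  classical
  set i0 : Fin n := ⟨0, by omega⟩ with hi0
  set iN : Fin n := ⟨n-1, by omega⟩ with hiN
  have hrev0 : i0.rev = iN := by
    apply Fin.ext
    rw [Fin.val_rev]
  have hrevN : iN.rev = i0 := by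
    rw [← hrev0, Fin.rev_rev]
  have hne : w i0 ≠ w iN := by
    rw [← hrev0]; exact hanti i0
  set T : Finset ((Fin d → ℤ) × (Fin d → ℤ)) :=
    ((Fintype.piFinset (fun _ : Fin d => Finset.Icc (1:ℤ) n)) ×ˢ
      (Fintype.piFinset (fun _ : Fin d => Finset.Icc (1:ℤ) n))).filter
      (fun ab => (∀ j, ab.1 j = ab.2 j ∨
          ((ab.1 j = 1 ∨ ab.1 j = (n:ℤ)) ∧ (ab.2 j = 1 ∨ ab.2 j = (n:ℤ)))) ∧
        G ab.1 = w i0 ∧ G ab.2 = w iN) with hT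
  have hinj : (SF d w G).card ≤ T.card := by
    apply Finset.card_le_card_of_injOn (f := fun pv =>
      if (∀ i : Fin n, G (fun j => pv.1 j + ((i:ℕ):ℤ) * pv.2 j) = w i)
      then (pv.1, fun j => pv.1 j + ((n:ℤ)-1) * pv.2 j)
      else ((fun j => pv.1 j + ((n:ℤ)-1) * pv.2 j), pv.1))
    · intro pv hpv
      simp only [Finset.mem_coe] at hpv ⊢
      rw [SF, Finset.mem_filter] at hpv
      obtain ⟨hbox, hcanon, hline⟩ := hpv
      obtain ⟨hent, hpos, hbnd⟩ := hcanon
      have hq : ∀ j, 1 ≤ pv.1 j + ((n:ℤ)-1) * pv.2 j ∧ pv.1 j + ((n:ℤ)-1) * pv.2 j ≤ n := by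
        intro j
        have hb := hbnd (n-1) (by omega) j
        have hc : ((n-1:ℕ):ℤ) = (n:ℤ)-1 := by omega
        rwa [hc] at hb
      have hmemp : pv.1 ∈ Fintype.piFinset (fun _ : Fin d => Finset.Icc (1:ℤ) n) := by
        rw [Fintype.mem_piFinset]; intro j
        have h := (bnd_facts hn hbnd j).2.2
        simpa [Finset.mem_Icc] using h
      have hmemq : (fun j => pv.1 j + ((n:ℤ)-1) * pv.2 j)
          ∈ Fintype.piFinset (fun _ : Fin d => Finset.Icc (1:ℤ) n) := by
        rw [Fintype.mem_piFinset]; intro j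
        simpa [Finset.mem_Icc] using hq j
      have hcoord : ∀ j, pv.1 j = pv.1 j + ((n:ℤ)-1) * pv.2 j ∨
          ((pv.1 j = 1 ∨ pv.1 j = (n:ℤ)) ∧
            (pv.1 j + ((n:ℤ)-1) * pv.2 j = 1 ∨ pv.1 j + ((n:ℤ)-1) * pv.2 j = (n:ℤ))) := by
        intro j
        have hb := bnd_facts hn hbnd j
        rcases hent j with h|h|h
        · right
          rw [h, hb.2.1 h]
          exact ⟨Or.inr rfl, Or.inl (by ring)⟩
        · left; rw [h]; ring
        · right
          rw [h, hb.1 h]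
          exact ⟨Or.inl rfl, Or.inr (by ring)⟩
      have hx0 : (fun j => pv.1 j + ((i0:ℕ):ℤ) * pv.2 j) = pv.1 := by
        funext j
        have : ((i0:ℕ):ℤ) = 0 := by simp [hi0]
        rw [this]; ring
      have hxN : (fun j => pv.1 j + ((iN:ℕ):ℤ) * pv.2 j)
          = fun j => pv.1 j + ((n:ℤ)-1) * pv.2 j := by
        funext j
        have : ((iN:ℕ):ℤ) = (n:ℤ)-1 := by simp [hiN]; omega
        rw [this]
      by_cases hfwd : (∀ i : Fin n, G (fun j => pv.1 j + ((i:ℕ):ℤ) * pv.2 j) = w i)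
      · rw [if_pos hfwd, hT, Finset.mem_filter]
        refine ⟨Finset.mem_product.mpr ⟨hmemp, hmemq⟩, hcoord, ?_, ?_⟩
        · have h := hfwd i0
          rwa [hx0] at h
        · have h := hfwd iN
          rwa [hxN] at h
      · rw [if_neg hfwd, hT, Finset.mem_filter]
        have hbwd : ∀ i : Fin n, G (fun j => pv.1 j + ((i:ℕ):ℤ) * pv.2 j) = w i.rev := by
          rcases hline with h | h
          · exact absurd h hfwd
          · exact h
        refine ⟨Finset.mem_product.mpr ⟨hmemq, hmemp⟩, fun j => ?_, ?_, ?_⟩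
        · rcases hcoord j with h | h
          · left; exact h.symm
          · right; exact ⟨h.2, h.1⟩
        · have h := hbwd iN
          rw [hxN, hrevN] at h
          exact h
        · have h := hbwd i0
          rwa [hx0, hrev0] at h
    · intro pv hpv pv' hpv' heq
      simp only [] at heq
      have hcanon := (Finset.mem_filter.1 (Finset.mem_coe.1 hpv)).2.1
      have hcanon' := (Finset.mem_filter.1 (Finset.mem_coe.1 hpv')).2.1
      have hpos := hcanon.2.1
      have hpos' := hcanon'.2.1
      have hn1 : ((n:ℤ)-1) ≠ 0 := by omega
      have hsame : pv.1 = pv'.1 →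
          (fun j => pv.1 j + ((n:ℤ)-1) * pv.2 j) = (fun j => pv'.1 j + ((n:ℤ)-1) * pv'.2 j) →
          pv = pv' := by
        intro h1 h2
        refine Prod.ext h1 (funext fun j => ?_)
        have e1 := congrFun h2 j
        have e2 := congrFun h1 j
        have : ((n:ℤ)-1) * pv.2 j = ((n:ℤ)-1) * pv'.2 j := by linarith
        exact mul_left_cancel₀ hn1 this
      have hcross : pv.1 = (fun j => pv'.1 j + ((n:ℤ)-1) * pv'.2 j) →
          (fun j => pv.1 j + ((n:ℤ)-1) * pv.2 j) = pv'.1 → pv = pv' := by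
        intro h1 h2
        exfalso
        have hvv : pv'.2 = fun j => -pv.2 j := by
          funext j
          have e1 := congrFun h1 j
          have e2 := congrFun h2 j
          have hz : ((n:ℤ)-1) * (pv.2 j + pv'.2 j) = 0 := by linarith
          have := mul_eq_zero.1 hz
          rcases this with h | h
          · exact absurd h hn1
          · linarith
        rw [hvv] at hpos'
        exact pos_unique hpos hpos'
      by_cases c1 : (∀ i : Fin n, G (fun j => pv.1 j + ((i:ℕ):ℤ) * pv.2 j) = w i) <;>
        by_cases c2 : (∀ i : Fin n, G (fun j => pv'.1 j + ((i:ℕ):ℤ) * pv'.2 j) = w i)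
      · rw [if_pos c1, if_pos c2, Prod.mk.injEq] at heq
        exact hsame heq.1 heq.2
      · rw [if_pos c1, if_neg c2, Prod.mk.injEq] at heq
        exact hcross heq.1 heq.2
      · rw [if_neg c1, if_pos c2, Prod.mk.injEq] at heq
        exact hcross heq.2 heq.1
      · rw [if_neg c1, if_neg c2, Prod.mk.injEq] at heq
        exact hsame heq.2 heq.1
  -- fiberwise counting over component labels
  have hTcard : T.card = ∑ lam ∈ (Finset.univ : Finset (Fin d → Option (Fin (n-2)))),
      (T.filter (fun ab => keyFn n d ab = lam)).card := by
    apply Finset.card_eq_sum_card_fiberwise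
    intro x _
    exact Finset.mem_univ _
  have hfiber : ∀ lam : Fin d → Option (Fin (n-2)),
      4 * (T.filter (fun ab => keyFn n d ab = lam)).card
        + (if (Finset.univ.filter (fun j => (lam j).isNone = true)).card = 0 then 1 else 0)
        ≤ 4 ^ (Finset.univ.filter (fun j => (lam j).isNone = true)).card := by
    intro lam
    set t := (Finset.univ.filter (fun j => (lam j).isNone = true)).card with htdef
    set C : Finset (Fin d → ℤ) := Fintype.piFinset
      (fun j => (lam j).elim ({1, (n:ℤ)} : Finset ℤ) (fun c => {((c:ℕ):ℤ) + 2})) with hC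
    have hCcard : C.card = 2 ^ t := by
      rw [hC, Fintype.card_piFinset]
      have hcell : ∀ j, ((lam j).elim ({1, (n:ℤ)} : Finset ℤ)
          (fun c => ({((c:ℕ):ℤ) + 2} : Finset ℤ))).card
          = if (lam j).isNone = true then 2 else 1 := by
        intro j
        rcases hl : lam j with _ | c
        · simp only [Option.elim, Option.isNone_none, if_pos]
          exact Finset.card_pair (by omega)
        · simp [Option.elim]
      rw [Finset.prod_congr rfl (fun j _ => hcell j)]
      rw [← Finset.prod_filter_mul_prod_filter_not Finset.univ (fun j => (lam j).isNone = true)]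
      rw [Finset.prod_congr rfl (fun x hx => if_pos (Finset.mem_filter.1 hx).2),
          Finset.prod_eq_one (fun x hx => if_neg (Finset.mem_filter.1 hx).2),
          Finset.prod_const, mul_one]
    set X := C.filter (fun x => G x = w i0) with hX
    set Y := C.filter (fun x => G x = w iN) with hY
    have hsubXY : T.filter (fun ab => keyFn n d ab = lam) ⊆ X ×ˢ Y := by
      intro ab hab
      rw [Finset.mem_filter] at hab
      obtain ⟨habT, habkey⟩ := hab
      rw [hT, Finset.mem_filter] at habT
      obtain ⟨habbox, habcond, habA, habB⟩ := habT
      rw [Finset.mem_product] at habbox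
      have hIcc1 : ∀ j, 1 ≤ ab.1 j ∧ ab.1 j ≤ (n:ℤ) := by
        intro j
        have := (Fintype.mem_piFinset.1 habbox.1) j
        simpa [Finset.mem_Icc] using this
      have hIcc2 : ∀ j, 1 ≤ ab.2 j ∧ ab.2 j ≤ (n:ℤ) := by
        intro j
        have := (Fintype.mem_piFinset.1 habbox.2) j
        simpa [Finset.mem_Icc] using this
      have hcases : ∀ j, (ab.1 j = ab.2 j ∧ 2 ≤ ab.1 j ∧ ab.1 j ≤ (n:ℤ) - 1) ∨
          ((ab.1 j = 1 ∨ ab.1 j = (n:ℤ)) ∧ (ab.2 j = 1 ∨ ab.2 j = (n:ℤ))) := by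
        intro j
        rcases habcond j with h | h
        · by_cases h2 : 2 ≤ ab.1 j ∧ ab.1 j ≤ (n:ℤ) - 1
          · exact Or.inl ⟨h, h2⟩
          · right
            have b1 := hIcc1 j
            have b2 := hIcc2 j
            constructor
            · omega
            · rw [← h]; omega
        · exact Or.inr h
      have hmem12 : ab.1 ∈ C ∧ ab.2 ∈ C := by
        constructor <;> rw [hC, Fintype.mem_piFinset] <;> intro j <;>
          have hkj := congrFun habkey j <;>
          rw [keyFn_def] at hkj
        · rcases hcases j with h | h
          · rw [dif_pos h] at hkj
            rw [← hkj]
            simp only [Option.elim, Finset.mem_singleton]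
            omega
          · have hno : ¬ (ab.1 j = ab.2 j ∧ 2 ≤ ab.1 j ∧ ab.1 j ≤ (n:ℤ) - 1) := by
              rcases h.1 with h1 | h1 <;> rw [h1] <;> omega
            rw [dif_neg hno] at hkj
            rw [← hkj]
            simp only [Option.elim, Finset.mem_insert, Finset.mem_singleton]
            exact h.1
        · rcases hcases j with h | h
          · rw [dif_pos h] at hkj
            rw [← hkj]
            simp only [Option.elim, Finset.mem_singleton]
            have := h.1
            omega
          · have hno : ¬ (ab.1 j = ab.2 j ∧ 2 ≤ ab.1 j ∧ ab.1 j ≤ (n:ℤ) - 1) := by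
              rcases h.1 with h1 | h1 <;> rw [h1] <;> omega
            rw [dif_neg hno] at hkj
            rw [← hkj]
            simp only [Option.elim, Finset.mem_insert, Finset.mem_singleton]
            exact h.2
      rw [Finset.mem_product, hX, hY, Finset.mem_filter, Finset.mem_filter]
      exact ⟨⟨hmem12.1, habA⟩, ⟨hmem12.2, habB⟩⟩
    have hdisj : Disjoint X Y := by
      rw [hX, hY, Finset.disjoint_left]
      intro x hx hy
      rw [Finset.mem_filter] at hx hy
      exact hne (hx.2.symm.trans hy.2)
    have hXY : X.card + Y.card ≤ 2 ^ t := by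
      rw [← Finset.card_union_of_disjoint hdisj, ← hCcard]
      exact Finset.card_le_card (Finset.union_subset (Finset.filter_subset _ _)
        (Finset.filter_subset _ _))
    have hprod : (T.filter (fun ab => keyFn n d ab = lam)).card ≤ X.card * Y.card := by
      calc (T.filter (fun ab => keyFn n d ab = lam)).card ≤ (X ×ˢ Y).card :=
            Finset.card_le_card hsubXY
        _ = X.card * Y.card := Finset.card_product X Y
    by_cases ht0 : t = 0
    · have hallsome : ∀ j, ¬ ((lam j).isNone = true) := by
        intro j hj
        have hjmem : j ∈ Finset.univ.filter (fun j => (lam j).isNone = true) := by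
          simp only [Finset.mem_filter, Finset.mem_univ, true_and]
          exact hj
        have := Finset.card_pos.mpr ⟨j, hjmem⟩
        omega
      have hempty : T.filter (fun ab => keyFn n d ab = lam) = ∅ := by
        rw [Finset.eq_empty_iff_forall_notMem]
        intro ab hab
        rw [Finset.mem_filter] at hab
        obtain ⟨habT, habkey⟩ := hab
        rw [hT, Finset.mem_filter] at habT
        obtain ⟨habbox, habcond, habA, habB⟩ := habT
        have heqab : ab.1 = ab.2 := by
          funext j
          have hkj := congrFun habkey j
          rw [keyFn_def] at hkj
          by_cases hcase : ab.1 j = ab.2 j ∧ 2 ≤ ab.1 j ∧ ab.1 j ≤ (n:ℤ) - 1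
          · exact hcase.1
          · rw [dif_neg hcase] at hkj
            exact absurd (by rw [← hkj]; rfl) (hallsome j)
        rw [heqab] at habA
        exact hne (habA.symm.trans habB)
      rw [hempty, ht0]
      simp
    · rw [if_neg ht0, add_zero]
      have h4 : 4 * (X.card * Y.card) ≤ 4 ^ t := by
        have hsq : 4 * (X.card * Y.card) ≤ (X.card + Y.card)^2 := by
          zify
          nlinarith [sq_nonneg ((X.card:ℤ) - (Y.card:ℤ))]
        calc 4 * (X.card * Y.card) ≤ (X.card + Y.card)^2 := hsq
          _ ≤ (2^t)^2 := Nat.pow_le_pow_left hXY 2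
          _ = 4^t := by
              rw [← pow_mul, show (4:ℕ) = 2^2 from rfl, ← pow_mul, mul_comm]
      exact le_trans (Nat.mul_le_mul_left 4 hprod) h4
  have hsum : 4 * T.card + ∑ lam : Fin d → Option (Fin (n-2)),
      (if (Finset.univ.filter (fun j => (lam j).isNone = true)).card = 0 then 1 else 0)
      ≤ ∑ lam : Fin d → Option (Fin (n-2)),
          4 ^ (Finset.univ.filter (fun j => (lam j).isNone = true)).card := by
    rw [hTcard, Finset.mul_sum, ← Finset.sum_add_distrib]
    exact Finset.sum_le_sum (fun lam _ => hfiber lam)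
  have hS1 : ∑ lam : Fin d → Option (Fin (n-2)),
      (4:ℕ) ^ (Finset.univ.filter (fun j => (lam j).isNone = true)).card = (n+2)^d := by
    have hs : (∑ c : Option (Fin (n-2)), if c.isNone = true then (4:ℕ) else 1) = n + 2 := by
      rw [Fintype.sum_option]
      simp
      clear * - hn
      omega
    have h := sum_pow_cnt (κ := Option (Fin (n-2))) (fun c => c.isNone = true) (4:ℕ) d
    rw [hs] at h
    exact h
  have hS0 : ∑ lam : Fin d → Option (Fin (n-2)),
      (if (Finset.univ.filter (fun j => (lam j).isNone = true)).card = 0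
        then (1:ℕ) else 0) = (n-2)^d := by
    have hpt : ∀ lam : Fin d → Option (Fin (n-2)),
        (if (Finset.univ.filter (fun j => (lam j).isNone = true)).card = 0 then (1:ℕ) else 0)
          = 0 ^ (Finset.univ.filter (fun j => (lam j).isNone = true)).card := by
      intro lam
      by_cases h : (Finset.univ.filter (fun j => (lam j).isNone = true)).card = 0
      · rw [if_pos h, h, pow_zero]
      · rw [if_neg h, zero_pow h]
    have hs : (∑ c : Option (Fin (n-2)), if c.isNone = true then (0:ℕ) else 1) = n - 2 := by
      rw [Fintype.sum_option]
      simp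
    have h := sum_pow_cnt (κ := Option (Fin (n-2))) (fun c => c.isNone = true) (0:ℕ) d
    rw [hs] at h
    rw [Finset.sum_congr rfl (fun lam _ => hpt lam), h]
  have hcount : count d w G = (SF d w G).card := count_eq_SF_card (by clear * - hn; omega) d w G
  rw [hS1, hS0] at hsum
  rw [hcount]
  clear * - hsum hinj
  set a := (n+2)^d with ha
  set b := (n-2)^d with hb
  omega

theorem antisymmetric_fword_hd {n : ℕ} (hn : 2 ≤ n) (w : Fin n → α)
    (A M : α) (hAM : A ≠ M) (htwo : ∀ i, w i = A ∨ w i = M)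
    (hanti : ∀ i, w i ≠ w i.rev) (d : ℕ) (hd : 1 ≤ d) :
    4 * fword w d = (n + 2) ^ d - (n - 2) ^ d := by
  classical
  have hub : ∀ G : (Fin d → ℤ) → α, 4 * count d w G + (n-2)^d ≤ (n+2)^d :=
    fun G => upper_bound hn w hanti d G
  obtain ⟨G₀, hlb⟩ := lower_bound hn w A M hAM htwo hanti d
  set S : Set ℕ := {m | ∃ G : (Fin d → ℤ) → α, count d w G = m} with hS
  have hbdd : BddAbove S := by
    refine ⟨(n+2)^d, fun m hm => ?_⟩
    obtain ⟨G, rfl⟩ := hm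
    have h := hub G
    set a := (n+2)^d with ha
    set b := (n-2)^d with hb
    omega
  have hSne : S.Nonempty := ⟨count d w (fun _ => A), ⟨(fun _ => A), rfl⟩⟩
  have hmem := Nat.sSup_mem hSne hbdd
  obtain ⟨Gm, hGm⟩ := hmem
  have h1 := hub Gm
  have h2 : count d w G₀ ≤ sSup S := le_csSup hbdd ⟨G₀, rfl⟩
  have hfw : fword w d = sSup S := rfl
  rw [hfw, ← hGm]
  set a := (n+2)^d with ha
  set b := (n-2)^d with hb
  have h3 : 4 * count d w G₀ + b ≤ 4 * count d w Gm + b := by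
    rw [hGm]; omega
  omega

end WordGridHD
end

section
/- Let w be a word of length n ≥ 2 in which some letter A appears exactly k times. Then f(w) ≥ 2k + 1. -/
namespace WordGrid

variable {α : Type*}

/-- The `i`-th row of the grid `G` contains the word `w` (forwards or backwards). -/
def rowC {n : ℕ} (w : Fin n → α) (G : Fin n → Fin n → α) (i : Fin n) : Prop :=
  (∀ j, G i j = w j) ∨ (∀ j, G i j = w j.rev)

/-- The `i`-th column of the grid `G` contains the word `w` (forwards or backwards). -/
def colC {n : ℕ} (w : Fin n → α) (G : Fin n → Fin n → α) (i : Fin n) : Prop :=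
  (∀ j, G j i = w j) ∨ (∀ j, G j i = w j.rev)

/-- The main diagonal of the grid `G` contains the word `w`. -/
def diagC {n : ℕ} (w : Fin n → α) (G : Fin n → Fin n → α) : Prop :=
  (∀ j, G j j = w j) ∨ (∀ j, G j j = w j.rev)

/-- The anti-diagonal of the grid `G` contains the word `w`. -/
def adiagC {n : ℕ} (w : Fin n → α) (G : Fin n → Fin n → α) : Prop :=
  (∀ j, G j j.rev = w j) ∨ (∀ j, G j j.rev = w j.rev)

open Classical in
/-- `f(w,G)`: the number of rows, columns and diagonals of `G` containing `w`. -/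
noncomputable def count {n : ℕ} (w : Fin n → α) (G : Fin n → Fin n → α) : ℕ :=
  {i | rowC w G i}.ncard + {i | colC w G i}.ncard
    + (if diagC w G then 1 else 0) + (if adiagC w G then 1 else 0)

/-- `f(w)`: the maximum of `f(w,G)` over all `n`-grids `G`. -/
noncomputable def fword {n : ℕ} (w : Fin n → α) : ℕ :=
  sSup {m | ∃ G : Fin n → Fin n → α, count w G = m}

theorem fword_many_letter {n k : ℕ} (hn : 2 ≤ n) (w : Fin n → α)
    (A : α) (hA : {i | w i = A}.ncard = k) :
    fword w ≥ 2 * k + 1 := by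
  classical
  set G : Fin n → Fin n → α := fun i j =>
    if w i = A then w j else if w j = A then w i else if i = j then w i else A with hG
  have hrow : ∀ i, w i = A → rowC w G i := fun i h =>
    Or.inl (fun j => by simp [hG, h])
  have hcol : ∀ i, w i = A → colC w G i := fun i h => by
    refine Or.inl fun j => ?_
    by_cases hj : w j = A <;> simp [hG, hj, h]
  have hdiag : diagC w G := by
    refine Or.inl fun j => ?_
    by_cases hj : w j = A <;> simp [hG, hj]
  have hcard : ∀ S : Set (Fin n), S.ncard ≤ n := fun S => by
    calc S.ncard ≤ (Set.univ : Set (Fin n)).ncard :=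
          Set.ncard_le_ncard (Set.subset_univ _) Set.finite_univ
      _ = n := by simp [Set.ncard_univ]
  have hsubr : {i | w i = A} ⊆ {i | rowC w G i} := fun i hi => hrow i hi
  have hsubc : {i | w i = A} ⊆ {i | colC w G i} := fun i hi => hcol i hi
  have hfinr : {i | rowC w G i}.Finite := Set.toFinite _
  have hfinc : {i | colC w G i}.Finite := Set.toFinite _
  have hr : k ≤ {i | rowC w G i}.ncard := hA ▸ Set.ncard_le_ncard hsubr hfinr
  have hc : k ≤ {i | colC w G i}.ncard := hA ▸ Set.ncard_le_ncard hsubc hfinc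
  have hcount : 2 * k + 1 ≤ count w G := by
    unfold count
    have : (if diagC w G then 1 else 0) = 1 := if_pos hdiag
    rw [this]
    omega
  have hbdd : BddAbove {m | ∃ G' : Fin n → Fin n → α, count w G' = m} := by
    refine ⟨2 * n + 2, fun m hm => ?_⟩
    obtain ⟨G', rfl⟩ := hm
    unfold count
    have h1 := hcard {i | rowC w G' i}
    have h2 := hcard {i | colC w G' i}
    have h3 : (if diagC w G' then 1 else 0) ≤ 1 := by split <;> omega
    have h4 : (if adiagC w G' then 1 else 0) ≤ 1 := by split <;> omega
    omega
  calc 2 * k + 1 ≤ count w G := hcount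
    _ ≤ fword w := le_csSup hbdd ⟨G, rfl⟩

end WordGrid
end

section
/- Let w be a word of length n ≥ 2 in which some letter A appears exactly k times, and suppose additionally that w_i = w_{n-i+1} for every index i with w_i = A. Then f(w) ≥ 2k + 2. -/
namespace WordGrid

variable {α : Type*}

theorem fword_many_letter_sym {n k : ℕ} (hn : 2 ≤ n) (w : Fin n → α)
    (A : α) (hA : {i | w i = A}.ncard = k)
    (hsym : ∀ i, w i = A → w i = w i.rev) :
    fword w ≥ 2 * k + 2 := by
  classical
  set G : Fin n → Fin n → α := fun i j => if w i = A then w j else w i with hG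
  have hrow : ∀ i : Fin n, w i = A → rowC w G i := by
    intro i hi
    exact Or.inl fun j => by simp [hG, hi]
  have hcol : ∀ j : Fin n, w j = A → colC w G j := by
    intro j hj
    refine Or.inl fun i => ?_
    simp only [hG]
    split
    · next h => rw [hj, h]
    · rfl
  have hdiag : diagC w G := by
    refine Or.inl fun j => ?_
    simp only [hG]
    split <;> rfl
  have hadiag : adiagC w G := by
    refine Or.inl fun j => ?_
    simp only [hG]
    split
    · next h => exact (hsym j h).symm
    · rfl
  have hr : k ≤ {i | rowC w G i}.ncard := by
    rw [← hA]
    exact Set.ncard_le_ncard (fun i hi => hrow i hi) (Set.toFinite _)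
  have hc : k ≤ {i | colC w G i}.ncard := by
    rw [← hA]
    exact Set.ncard_le_ncard (fun i hi => hcol i hi) (Set.toFinite _)
  have hcount : 2 * k + 2 ≤ count w G := by
    unfold count
    rw [if_pos hdiag, if_pos hadiag]
    omega
  have hmem : count w G ∈ {m | ∃ G' : Fin n → Fin n → α, count w G' = m} := ⟨G, rfl⟩
  have hbdd : BddAbove {m | ∃ G' : Fin n → Fin n → α, count w G' = m} := by
    refine ⟨2 * n + 2, ?_⟩
    rintro m ⟨G', rfl⟩
    have h1 : {i | rowC w G' i}.ncard ≤ n := by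
      have := Set.ncard_le_ncard (Set.subset_univ {i | rowC w G' i}) (Set.toFinite _)
      simpa [Set.ncard_univ] using this
    have h2 : {i | colC w G' i}.ncard ≤ n := by
      have := Set.ncard_le_ncard (Set.subset_univ {i | colC w G' i}) (Set.toFinite _)
      simpa [Set.ncard_univ] using this
    unfold count
    split <;> split <;> omega
  exact le_trans hcount (le_csSup hbdd hmem)

end WordGrid
end

section
/- Let w be a word of length n ≥ 2 and let A, M be two distinct letters used in w. Let T = {i : w_i = A and w_{n-i+1} = M} and t = |T|. Then f(w) ≥ 4t. -/
namespace WordGrid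

variable {α : Type*}

theorem fword_four_t {n : ℕ} (hn : 2 ≤ n) (w : Fin n → α)
    (A M : α) (hAM : A ≠ M) (hA : ∃ i, w i = A) (hM : ∃ i, w i = M) :
    fword w ≥ 4 * {i | w i = A ∧ w i.rev = M}.ncard := by
  classical
  set T : Set (Fin n) := {i | w i = A ∧ w i.rev = M} with hT
  set T' : Set (Fin n) := {i | w i.rev = A ∧ w i = M} with hT'
  set G : Fin n → Fin n → α := fun i j =>
    if w i = A ∧ w i.rev = M then w j
    else if w i.rev = A ∧ w i = M then w j.rev
    else if w j = A ∧ w j.rev = M then w i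
    else if w j.rev = A ∧ w j = M then w i.rev
    else w j with hG
  -- T' is the image of T under rev
  have himg : T' = Fin.rev '' T := by
    ext i
    constructor
    · intro hi
      exact ⟨i.rev, ⟨hi.1, by simpa [Fin.rev_rev] using hi.2⟩, Fin.rev_rev i⟩
    · rintro ⟨x, hx, rfl⟩
      exact ⟨by simpa [Fin.rev_rev] using hx.1, hx.2⟩
  have hcard : T'.ncard = T.ncard := by
    rw [himg]; exact Set.ncard_image_of_injective _ Fin.rev_injective
  have hdisj : Disjoint T T' := by
    rw [Set.disjoint_left]
    intro i hi hi'
    exact hAM (hi.1.symm.trans hi'.2)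
  have hrow : ∀ i ∈ T ∪ T', rowC w G i := by
    rintro i (⟨hi1, hi2⟩ | ⟨hi1, hi2⟩)
    · left; intro j; simp only [hG]; rw [if_pos ⟨hi1, hi2⟩]
    · right; intro j
      have h1 : ¬ (w i = A ∧ w i.rev = M) := fun h => hAM (h.1.symm.trans hi2)
      simp only [hG]; rw [if_neg h1, if_pos ⟨hi1, hi2⟩]
  have hcol : ∀ j ∈ T ∪ T', colC w G j := by
    rintro j (⟨hj1, hj2⟩ | ⟨hj1, hj2⟩)
    · left; intro i
      simp only [hG]
      by_cases h1 : w i = A ∧ w i.rev = M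
      · rw [if_pos h1, hj1, h1.1]
      · by_cases h2 : w i.rev = A ∧ w i = M
        · rw [if_neg h1, if_pos h2, hj2, h2.2]
        · rw [if_neg h1, if_neg h2, if_pos ⟨hj1, hj2⟩]
    · right; intro i
      simp only [hG]
      have h3 : ¬ (w j = A ∧ w j.rev = M) := fun h => hAM (h.1.symm.trans hj2)
      by_cases h1 : w i = A ∧ w i.rev = M
      · rw [if_pos h1, hj2, h1.2]
      · by_cases h2 : w i.rev = A ∧ w i = M
        · rw [if_neg h1, if_pos h2, hj1, h2.1]
        · rw [if_neg h1, if_neg h2, if_neg h3, if_pos ⟨hj1, hj2⟩]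
  have hsubR : T ∪ T' ⊆ {i | rowC w G i} := fun i hi => hrow i hi
  have hsubC : T ∪ T' ⊆ {i | colC w G i} := fun i hi => hcol i hi
  have hunion : (T ∪ T').ncard = 2 * T.ncard := by
    rw [Set.ncard_union_eq hdisj (Set.toFinite _) (Set.toFinite _), hcard]; ring
  have hR : 2 * T.ncard ≤ {i | rowC w G i}.ncard := by
    rw [← hunion]; exact Set.ncard_le_ncard hsubR (Set.toFinite _)
  have hC : 2 * T.ncard ≤ {i | colC w G i}.ncard := by
    rw [← hunion]; exact Set.ncard_le_ncard hsubC (Set.toFinite _)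
  have hcount : 4 * T.ncard ≤ count w G := by
    unfold count
    omega
  have hbdd : BddAbove {m | ∃ G : Fin n → Fin n → α, count w G = m} := by
    refine ⟨n + n + 1 + 1, ?_⟩
    rintro m ⟨G', rfl⟩
    have h1 : {i | rowC w G' i}.ncard ≤ n := by
      have := Set.ncard_le_ncard (Set.subset_univ {i | rowC w G' i}) Set.finite_univ
      simpa [Set.ncard_univ] using this
    have h2 : {i | colC w G' i}.ncard ≤ n := by
      have := Set.ncard_le_ncard (Set.subset_univ {i | colC w G' i}) Set.finite_univ
      simpa [Set.ncard_univ] using this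
    unfold count
    split_ifs <;> omega
  exact le_trans hcount (le_csSup hbdd ⟨G, rfl⟩)

end WordGrid
end

section
/- Let w be a word of length n ≥ 2 using only two distinct letters A and M. Let T = {i : w_i = A and w_{n-i+1} = M} and t = |T|. Then f(w) ≥ n + t. -/
namespace WordGrid

variable {α : Type*}

theorem fword_n_plus_t {n : ℕ} (hn : 2 ≤ n) (w : Fin n → α)
    (A M : α) (hAM : A ≠ M) (htwo : ∀ i, w i = A ∨ w i = M) :
    fword w ≥ n + {i | w i = A ∧ w i.rev = M}.ncard := by
  classical
  -- the grid
  set G : Fin n → Fin n → α := fun i j => if w i = A then w j else w j.rev with hG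
  -- bounded above
  have hbdd : BddAbove {m | ∃ G : Fin n → Fin n → α, count w G = m} := by
    refine ⟨2 * n + 2, ?_⟩
    rintro m ⟨H, rfl⟩
    have h1 : {i | rowC w H i}.ncard ≤ n := by
      calc {i | rowC w H i}.ncard ≤ (Set.univ : Set (Fin n)).ncard :=
            Set.ncard_le_ncard (Set.subset_univ _) (Set.toFinite _)
        _ = n := by simp [Set.ncard_univ]
    have h2 : {i | colC w H i}.ncard ≤ n := by
      calc {i | colC w H i}.ncard ≤ (Set.univ : Set (Fin n)).ncard :=
            Set.ncard_le_ncard (Set.subset_univ _) (Set.toFinite _)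
        _ = n := by simp [Set.ncard_univ]
    unfold count
    split <;> split <;> omega
  have hmem : count w G ∈ {m | ∃ G : Fin n → Fin n → α, count w G = m} := ⟨G, rfl⟩
  have hsup : count w G ≤ fword w := le_csSup hbdd hmem
  -- rows
  have hrow : {i | rowC w G i} = Set.univ := by
    ext i
    simp only [Set.mem_setOf_eq, Set.mem_univ, iff_true, rowC]
    by_cases h : w i = A
    · left; intro j; simp [hG, h]
    · right; intro j; simp [hG, h]
  have hrown : {i | rowC w G i}.ncard = n := by
    rw [hrow, Set.ncard_univ]; simp
  -- columns
  have hcol : {i | w i = A ∧ w i.rev = M} ⊆ {i | colC w G i} := by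
    rintro j ⟨hjA, hjM⟩
    left
    intro i
    show (if w i = A then w j else w j.rev) = w i
    by_cases h : w i = A
    · rw [if_pos h, hjA, h]
    · have hM : w i = M := (htwo i).resolve_left h
      rw [if_neg h, hjM, hM]
  have hcoln : {i | w i = A ∧ w i.rev = M}.ncard ≤ {i | colC w G i}.ncard :=
    Set.ncard_le_ncard hcol (Set.toFinite _)
  have hcount : n + {i | w i = A ∧ w i.rev = M}.ncard ≤ count w G := by
    unfold count
    rw [hrown]
    split <;> split <;> omega
  exact le_trans hcount hsup

end WordGrid
end

section
/- Let w be a word of length n ≥ 2 such that w_i ≠ w_{n-i+1} for some index i. Then f(w) ≤ 2n. -/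
namespace WordGrid

variable {α : Type*}

/-- If the main diagonal contains `w` and `w i ≠ w (rev i)`, then column `i` and
row `rev i` cannot both contain `w`. -/
lemma diag_block {n : ℕ} {w : Fin n → α} {G : Fin n → Fin n → α} {i : Fin n}
    (hi : w i ≠ w i.rev) (hd : diagC w G) : ¬(colC w G i ∧ rowC w G i.rev) := by
  rintro ⟨hc | hc, hr | hr⟩ <;> rcases hd with hd | hd <;> (
    have d1 := hd i; have d2 := hd i.rev
    have c1 := hc i; have c2 := hc i.rev
    have r1 := hr i; have r2 := hr i.rev
    simp -failIfUnchanged only [Fin.rev_rev] at *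
    grind)

/-- If the anti-diagonal contains `w` and `w i ≠ w (rev i)`, then column `i` and
row `i` cannot both contain `w`. -/
lemma adiag_block {n : ℕ} {w : Fin n → α} {G : Fin n → Fin n → α} {i : Fin n}
    (hi : w i ≠ w i.rev) (ha : adiagC w G) : ¬(colC w G i ∧ rowC w G i) := by
  rintro ⟨hc | hc, hr | hr⟩ <;> rcases ha with ha | ha <;> (
    have d1 := ha i; have d2 := ha i.rev
    have c1 := hc i; have c2 := hc i.rev
    have r1 := hr i; have r2 := hr i.rev
    simp only [Fin.rev_rev] at *
    grind)

lemma card_le {n : ℕ} (s : Set (Fin n)) : s.ncard ≤ n := by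
  have := Set.ncard_le_ncard (Set.subset_univ s) Set.finite_univ
  simpa [Set.ncard_univ] using this

lemma card_le_one {n : ℕ} {s : Set (Fin n)} {x : Fin n} (hx : x ∉ s) : s.ncard + 1 ≤ n := by
  have h1 : (insert x s).ncard = s.ncard + 1 := Set.ncard_insert_of_notMem hx (Set.toFinite s)
  have := card_le (insert x s)
  omega

lemma card_le_two {n : ℕ} {s : Set (Fin n)} {x y : Fin n} (hxy : x ≠ y)
    (hx : x ∉ s) (hy : y ∉ s) : s.ncard + 2 ≤ n := by
  have hy' : y ∉ insert x s := by
    simp only [Set.mem_insert_iff]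
    push_neg
    exact ⟨fun h => hxy h.symm, hy⟩
  have h1 : (insert x s).ncard = s.ncard + 1 := Set.ncard_insert_of_notMem hx (Set.toFinite s)
  have := card_le_one hy'
  omega

lemma count_le_two_n {n : ℕ} (w : Fin n → α) (G : Fin n → Fin n → α)
    (h : ∃ i, w i ≠ w i.rev) : count w G ≤ 2 * n := by
  classical
  obtain ⟨i, hi⟩ := h
  have hi' : w i.rev ≠ w i.rev.rev := by
    rw [Fin.rev_rev]; exact fun h => hi h.symm
  have hne : i ≠ i.rev := fun h => hi (congrArg w h)
  set R : Set (Fin n) := {k | rowC w G k} with hR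
  set C : Set (Fin n) := {k | colC w G k} with hC
  have hRle : R.ncard ≤ n := card_le R
  have hCle : C.ncard ≤ n := card_le C
  by_cases hd : diagC w G <;> by_cases ha : adiagC w G <;>
    simp only [count, hd, ha, if_true, if_false, ← hR, ← hC]
  · -- both diagonals
    by_cases hci : colC w G i
    · have h1 : ¬ rowC w G i.rev := fun hr => diag_block hi hd ⟨hci, hr⟩
      have h2 : ¬ rowC w G i := fun hr => adiag_block hi ha ⟨hci, hr⟩
      have := card_le_two (s := R) hne (by simpa [hR] using h2) (by simpa [hR] using h1)
      omega
    · by_cases hci' : colC w G i.rev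
      · have h1 : ¬ rowC w G i := fun hr => by
          have := diag_block hi' hd ⟨hci', by rwa [Fin.rev_rev]⟩
          exact this
        have h2 : ¬ rowC w G i.rev := fun hr => adiag_block hi' ha ⟨hci', hr⟩
        have := card_le_two (s := R) hne (by simpa [hR] using h1) (by simpa [hR] using h2)
        omega
      · have := card_le_two (s := C) hne (by simpa [hC] using hci) (by simpa [hC] using hci')
        omega
  · -- only main diagonal
    by_cases hci : colC w G i
    · have h1 : ¬ rowC w G i.rev := fun hr => diag_block hi hd ⟨hci, hr⟩
      have := card_le_one (x := i.rev) (s := R) (by simpa [hR] using h1)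
      omega
    · have := card_le_one (x := i) (s := C) (by simpa [hC] using hci)
      omega
  · -- only anti-diagonal
    by_cases hci : colC w G i
    · have h1 : ¬ rowC w G i := fun hr => adiag_block hi ha ⟨hci, hr⟩
      have := card_le_one (x := i) (s := R) (by simpa [hR] using h1)
      omega
    · have := card_le_one (x := i) (s := C) (by simpa [hC] using hci)
      omega
  · omega

theorem fword_le_two_n {n : ℕ} (hn : 2 ≤ n) (w : Fin n → α)
    (h : ∃ i, w i ≠ w i.rev) :
    fword w ≤ 2 * n := by
  apply csSup_le'
  rintro m ⟨G, rfl⟩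
  exact count_le_two_n w G h

end WordGrid
end

section
/- Let w be a word of length n ≥ 2 such that each letter appears at most k times in w, and suppose there are exactly s indices i with w_i = w_{n-i+1}. Then f(w) ≤ max{n + 2k − s, n} + 2. -/
namespace WordGrid

variable {α : Type*}

/- ### Auxiliary lemmas -/

lemma aux_ncard_le_n {n : ℕ} (A : Set (Fin n)) : A.ncard ≤ n := by
  have := Set.ncard_le_ncard (Set.subset_univ A) Set.finite_univ
  simpa [Set.ncard_univ] using this

lemma aux_disj_sum_le {n : ℕ} (A B : Set (Fin n)) (hd : ∀ i, i ∈ A → i ∉ B) :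
    A.ncard + B.ncard ≤ n := by
  rw [← Set.ncard_union_eq (Set.disjoint_left.mpr hd)]
  exact aux_ncard_le_n _

lemma aux_ncard_rev_eq {n : ℕ} (A : Set (Fin n)) : (Fin.rev '' A).ncard = A.ncard :=
  Set.ncard_image_of_injective _ Fin.rev_injective

lemma aux_le_k {n k : ℕ} {w : Fin n → α} (h : ∀ a : α, {i | w i = a}.ncard ≤ k)
    {A : Set (Fin n)} (a : α) (hA : A ⊆ {i | w i = a}) : A.ncard ≤ k :=
  (Set.ncard_le_ncard hA (Set.toFinite _)).trans (h a)

lemma aux_le_k_rev {n k : ℕ} {w : Fin n → α} (h : ∀ a : α, {i | w i = a}.ncard ≤ k)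
    {A : Set (Fin n)} (a : α) (hA : A ⊆ {i | w i.rev = a}) : A.ncard ≤ k := by
  have himg : {i : Fin n | w i.rev = a} = Fin.rev '' {i | w i = a} := by
    ext i
    constructor
    · intro hi; exact ⟨i.rev, hi, i.rev_rev⟩
    · rintro ⟨x, hx, rfl⟩; simpa [Fin.rev_rev] using hx
  have := Set.ncard_le_ncard hA (Set.toFinite _)
  rw [himg, aux_ncard_rev_eq] at this
  exact this.trans (h a)

/-- The abstract core inequality: if `Rf, Rb` (resp. `Cf, Cb`) are sets of
forward/backward rows (resp. columns) satisfying the intersection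
compatibility constraints, and both a row and a column exist, then
`|R| + |C| + s ≤ n + 2k`. -/
lemma abstract_core {n k : ℕ} {w : Fin n → α}
    (h : ∀ a : α, {i | w i = a}.ncard ≤ k)
    (Rf Rb Cf Cb : Set (Fin n))
    (cff : ∀ i ∈ Rf, ∀ j ∈ Cf, w i = w j)
    (cfb : ∀ i ∈ Rf, ∀ j ∈ Cb, w j = w i.rev)
    (cbf : ∀ i ∈ Rb, ∀ j ∈ Cf, w i = w j.rev)
    (cbb : ∀ i ∈ Rb, ∀ j ∈ Cb, w i.rev = w j.rev)
    (hR : (Rf ∪ Rb).Nonempty) (hC : (Cf ∪ Cb).Nonempty) :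
    (Rf ∪ Rb).ncard + (Cf ∪ Cb).ncard + {i | w i = w i.rev}.ncard ≤ n + 2 * k := by
  classical
  by_cases hRf : Rf.Nonempty
  · by_cases hCf : Cf.Nonempty
    · by_cases hRb : Rb.Nonempty
      · by_cases hCb : Cb.Nonempty
        · -- all four nonempty: the main case
          obtain ⟨i0, hi0⟩ := hRf
          obtain ⟨i1, hi1⟩ := hRb
          obtain ⟨j0, hj0⟩ := hCf
          obtain ⟨j1, hj1⟩ := hCb
          have ea : w i0 = w j0 := cff i0 hi0 j0 hj0
          have eb : w i0.rev = w j1 := (cfb i0 hi0 j1 hj1).symm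
          have ec : w i1 = w j0.rev := cbf i1 hi1 j0 hj0
          have ed : w i1.rev = w j1.rev := cbb i1 hi1 j1 hj1
          have hRf1 : ∀ i ∈ Rf, w i = w j0 := fun i hi => cff i hi j0 hj0
          have hRf2 : ∀ i ∈ Rf, w i.rev = w j1 := fun i hi => (cfb i hi j1 hj1).symm
          have hRb1 : ∀ i ∈ Rb, w i = w j0.rev := fun i hi => cbf i hi j0 hj0
          have hRb2 : ∀ i ∈ Rb, w i.rev = w j1.rev := fun i hi => cbb i hi j1 hj1
          have hCf1 : ∀ j ∈ Cf, w j = w j0 := fun j hj => ((cff i0 hi0 j hj).symm).trans ea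
          have hCf2 : ∀ j ∈ Cf, w j.rev = w j0.rev := fun j hj =>
            ((cbf i1 hi1 j hj).symm).trans ec
          have hCb1 : ∀ j ∈ Cb, w j = w j1 := fun j hj => (cfb i0 hi0 j hj).trans eb
          have hCb2 : ∀ j ∈ Cb, w j.rev = w j1.rev := fun j hj =>
            ((cbb i1 hi1 j hj).symm).trans ed
          by_cases hab : w j0 = w j1
          · by_cases hac : w j0 = w j0.rev
            · -- a = b, a = c : everything in one letter class
              have hR1 : (Rf ∪ Rb).ncard ≤ k := by
                refine aux_le_k h (w j0) ?_
                rintro i (hi | hi)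
                · exact hRf1 i hi
                · exact (hRb1 i hi).trans hac.symm
              have hC1 : (Cf ∪ Cb).ncard ≤ k := by
                refine aux_le_k h (w j0) ?_
                rintro j (hj | hj)
                · exact hCf1 j hj
                · exact (hCb1 j hj).trans hab.symm
              have hS := aux_ncard_le_n {i | w i = w i.rev}
              omega
            · by_cases hbd : w j1 = w j1.rev
              · -- a = b = d, a ≠ c
                have hcd' : w j0.rev ≠ w j1.rev := fun e => hac (hab.trans (hbd.trans e.symm))
                have hC1 : (Cf ∪ Cb).ncard ≤ k := by
                  refine aux_le_k h (w j0) ?_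
                  rintro j (hj | hj)
                  · exact hCf1 j hj
                  · exact (hCb1 j hj).trans hab.symm
                have hRfk : Rf.ncard ≤ k := aux_le_k h (w j0) (fun i hi => hRf1 i hi)
                have hRbS : Rb.ncard + {i | w i = w i.rev}.ncard ≤ n := by
                  refine aux_disj_sum_le _ _ ?_
                  intro i hi hm
                  exact hcd' (((hRb1 i hi).symm.trans hm).trans (hRb2 i hi))
                have hun : (Rf ∪ Rb).ncard ≤ Rf.ncard + Rb.ncard := Set.ncard_union_le _ _
                omega
              · -- a ≠ c, b ≠ d : columns avoid the palindromic positions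
                have hdC : ∀ j, j ∈ Cf ∪ Cb → j ∉ {i | w i = w i.rev} := by
                  rintro j (hj | hj) hm
                  · exact hac (((hCf1 j hj).symm.trans hm).trans (hCf2 j hj))
                  · exact hbd (((hCb1 j hj).symm.trans hm).trans (hCb2 j hj))
                have h1 := aux_disj_sum_le _ _ hdC
                have h2 : (Rf ∪ Rb).ncard ≤ Rf.ncard + Rb.ncard := Set.ncard_union_le _ _
                have h3 : Rf.ncard ≤ k := aux_le_k h (w j0) (fun i hi => hRf1 i hi)
                have h4 : Rb.ncard ≤ k := aux_le_k h (w j0.rev) (fun i hi => hRb1 i hi)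
                omega
          · by_cases hcd : w j0.rev = w j1.rev
            · by_cases hac : w j0 = w j0.rev
              · -- a = c = d, a ≠ b
                have hbd' : w j1 ≠ w j1.rev := fun e => hab (hac.trans (hcd.trans e.symm))
                have hR1 : (Rf ∪ Rb).ncard ≤ k := by
                  refine aux_le_k h (w j0) ?_
                  rintro i (hi | hi)
                  · exact hRf1 i hi
                  · exact (hRb1 i hi).trans hac.symm
                have hCfk : Cf.ncard ≤ k := aux_le_k h (w j0) (fun j hj => hCf1 j hj)
                have hCbS : Cb.ncard + {i | w i = w i.rev}.ncard ≤ n := by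
                  refine aux_disj_sum_le _ _ ?_
                  intro j hj hm
                  exact hbd' (((hCb1 j hj).symm.trans hm).trans (hCb2 j hj))
                have hun : (Cf ∪ Cb).ncard ≤ Cf.ncard + Cb.ncard := Set.ncard_union_le _ _
                omega
              · by_cases hbd : w j1 = w j1.rev
                · -- b = c = d, a ≠ b : the doubled-palindrome-free case
                  set P : Set (Fin n) := {i | w i = w j0 ∧ w i.rev = w j1} with hP
                  have hRfP : Rf ⊆ P := fun i hi => ⟨hRf1 i hi, hRf2 i hi⟩
                  have hCfP : Cf ⊆ P := fun j hj =>
                    ⟨hCf1 j hj, (hCf2 j hj).trans (hcd.trans hbd.symm)⟩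
                  have hRbk : Rb.ncard ≤ k := aux_le_k h (w j0.rev) (fun i hi => hRb1 i hi)
                  have hCbk : Cb.ncard ≤ k := aux_le_k h (w j1) (fun j hj => hCb1 j hj)
                  have hPA : ∀ i, i ∈ P → i ∉ Fin.rev '' P := by
                    rintro i hi ⟨x, hx, rfl⟩
                    exact hab (hi.1.symm.trans hx.2)
                  have hdisjS : ∀ i, i ∈ P ∪ Fin.rev '' P → i ∉ {i | w i = w i.rev} := by
                    rintro i (hi | ⟨x, hx, rfl⟩) hm
                    · exact hab (hi.1.symm.trans (hm.trans hi.2))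
                    · refine hab ?_
                      have h1 : w x.rev.rev = w x := by rw [Fin.rev_rev]
                      exact ((hx.1.symm.trans h1.symm).trans hm.symm).trans hx.2
                  have h1 : (P ∪ Fin.rev '' P).ncard + {i | w i = w i.rev}.ncard ≤ n :=
                    aux_disj_sum_le _ _ hdisjS
                  have h2 : (P ∪ Fin.rev '' P).ncard = P.ncard + (Fin.rev '' P).ncard :=
                    Set.ncard_union_eq (Set.disjoint_left.mpr hPA)
                  have h3 : (Fin.rev '' P).ncard = P.ncard := aux_ncard_rev_eq P
                  have h4 : (Rf ∪ Rb).ncard ≤ Rf.ncard + Rb.ncard := Set.ncard_union_le _ _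
                  have h5 : (Cf ∪ Cb).ncard ≤ Cf.ncard + Cb.ncard := Set.ncard_union_le _ _
                  have h6 : Rf.ncard ≤ P.ncard := Set.ncard_le_ncard hRfP (Set.toFinite _)
                  have h7 : Cf.ncard ≤ P.ncard := Set.ncard_le_ncard hCfP (Set.toFinite _)
                  omega
                · -- a ≠ c, b ≠ d
                  have hdC : ∀ j, j ∈ Cf ∪ Cb → j ∉ {i | w i = w i.rev} := by
                    rintro j (hj | hj) hm
                    · exact hac (((hCf1 j hj).symm.trans hm).trans (hCf2 j hj))
                    · exact hbd (((hCb1 j hj).symm.trans hm).trans (hCb2 j hj))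
                  have h1 := aux_disj_sum_le _ _ hdC
                  have h2 : (Rf ∪ Rb).ncard ≤ Rf.ncard + Rb.ncard := Set.ncard_union_le _ _
                  have h3 : Rf.ncard ≤ k := aux_le_k h (w j0) (fun i hi => hRf1 i hi)
                  have h4 : Rb.ncard ≤ k := aux_le_k h (w j0.rev) (fun i hi => hRb1 i hi)
                  omega
            · -- a ≠ b, c ≠ d : rows avoid palindromic positions
              have hdR : ∀ i, i ∈ Rf ∪ Rb → i ∉ {i | w i = w i.rev} := by
                rintro i (hi | hi) hm
                · exact hab (((hRf1 i hi).symm.trans hm).trans (hRf2 i hi))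
                · exact hcd (((hRb1 i hi).symm.trans hm).trans (hRb2 i hi))
              have h1 := aux_disj_sum_le _ _ hdR
              have h2 : (Cf ∪ Cb).ncard ≤ Cf.ncard + Cb.ncard := Set.ncard_union_le _ _
              have h3 : Cf.ncard ≤ k := aux_le_k h (w j0) (fun j hj => hCf1 j hj)
              have h4 : Cb.ncard ≤ k := aux_le_k h (w j1) (fun j hj => hCb1 j hj)
              omega
        · -- Rf, Rb, Cf nonempty; Cb empty
          obtain ⟨i0, hi0⟩ := hRf
          obtain ⟨i1, hi1⟩ := hRb
          obtain ⟨j0, hj0⟩ := hCf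
          rw [Set.not_nonempty_iff_eq_empty.mp hCb, Set.union_empty]
          have hRfs : Rf ⊆ {i | w i = w j0} := fun i hi => cff i hi j0 hj0
          have hRbs : Rb ⊆ {i | w i = w j0.rev} := fun i hi => cbf i hi j0 hj0
          by_cases hc : w i0 = w i1
          · have e1 : w i0 = w j0 := cff i0 hi0 j0 hj0
            have e2 : w i1 = w j0.rev := cbf i1 hi1 j0 hj0
            have e3 : w j0.rev = w j0 := by rw [← e2, ← hc]; exact e1
            have hR1 : (Rf ∪ Rb).ncard ≤ k := by
              refine aux_le_k h (w j0) ?_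
              rintro i (hi | hi)
              · exact hRfs hi
              · exact (hRbs hi).trans e3
            have hC1 : Cf.ncard ≤ k :=
              aux_le_k h (w i0) (fun j hj => (cff i0 hi0 j hj).symm)
            have hS := aux_ncard_le_n {i | w i = w i.rev}
            omega
          · have hdC : ∀ j, j ∈ Cf → j ∉ {i | w i = w i.rev} := by
              intro j hj hm
              have e4 : w j = w i0 := (cff i0 hi0 j hj).symm
              have e5 : w j.rev = w i1 := (cbf i1 hi1 j hj).symm
              exact hc ((e4.symm.trans hm).trans e5)
            have h1 := aux_disj_sum_le _ _ hdC
            have h2 : (Rf ∪ Rb).ncard ≤ Rf.ncard + Rb.ncard := Set.ncard_union_le _ _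
            have h3 : Rf.ncard ≤ k := aux_le_k h (w j0) hRfs
            have h4 : Rb.ncard ≤ k := aux_le_k h (w j0.rev) hRbs
            omega
      · -- Rf, Cf nonempty; Rb empty
        obtain ⟨i0, hi0⟩ := hRf
        obtain ⟨j0, hj0⟩ := hCf
        rw [Set.not_nonempty_iff_eq_empty.mp hRb, Set.union_empty]
        by_cases hCb : Cb.Nonempty
        · -- Rf, Cf, Cb nonempty; Rb empty
          obtain ⟨j1, hj1⟩ := hCb
          have hCfs : Cf ⊆ {j | w j = w i0} := fun j hj => (cff i0 hi0 j hj).symm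
          have hCbs : Cb ⊆ {j | w j = w i0.rev} := fun j hj => cfb i0 hi0 j hj
          by_cases hc : w j0 = w j1
          · have e1 : w i0 = w j0 := cff i0 hi0 j0 hj0
            have e2 : w j1 = w i0.rev := cfb i0 hi0 j1 hj1
            have e3 : w i0.rev = w i0 := by rw [← e2, ← hc]; exact e1.symm
            have hC1 : (Cf ∪ Cb).ncard ≤ k := by
              refine aux_le_k h (w i0) ?_
              rintro j (hj | hj)
              · exact hCfs hj
              · exact (hCbs hj).trans e3
            have hR1 : Rf.ncard ≤ k :=
              aux_le_k h (w j0) (fun i hi => cff i hi j0 hj0)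
            have hS := aux_ncard_le_n {i | w i = w i.rev}
            omega
          · have hdR : ∀ i, i ∈ Rf → i ∉ {i | w i = w i.rev} := by
              intro i hi hm
              have e4 : w i = w j0 := cff i hi j0 hj0
              have e5 : w i.rev = w j1 := (cfb i hi j1 hj1).symm
              exact hc ((e4.symm.trans hm).trans e5)
            have h1 := aux_disj_sum_le _ _ hdR
            have h2 : (Cf ∪ Cb).ncard ≤ Cf.ncard + Cb.ncard := Set.ncard_union_le _ _
            have h3 : Cf.ncard ≤ k := aux_le_k h (w i0) hCfs
            have h4 : Cb.ncard ≤ k := aux_le_k h (w i0.rev) hCbs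
            omega
        · -- only Rf, Cf
          rw [Set.not_nonempty_iff_eq_empty.mp hCb, Set.union_empty]
          have h1 : Rf.ncard ≤ k :=
            aux_le_k h (w j0) (fun i hi => cff i hi j0 hj0)
          have h2 : Cf.ncard ≤ k :=
            aux_le_k h (w i0) (fun j hj => (cff i0 hi0 j hj).symm)
          have hS := aux_ncard_le_n {i | w i = w i.rev}
          omega
    · -- Cf empty
      rw [Set.not_nonempty_iff_eq_empty.mp hCf, Set.empty_union] at hC ⊢
      obtain ⟨j1, hj1⟩ := hC
      obtain ⟨i0, hi0⟩ := hRf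
      by_cases hRb : Rb.Nonempty
      · -- Rf, Rb, Cb nonempty; Cf empty
        obtain ⟨i1, hi1⟩ := hRb
        have hRfs : Rf ⊆ {i | w i.rev = w j1} := fun i hi => (cfb i hi j1 hj1).symm
        have hRbs : Rb ⊆ {i | w i.rev = w j1.rev} := fun i hi => cbb i hi j1 hj1
        by_cases hc : w i0.rev = w i1.rev
        · have e1 : w j1 = w i0.rev := cfb i0 hi0 j1 hj1
          have e2 : w i1.rev = w j1.rev := cbb i1 hi1 j1 hj1
          have e3 : w j1.rev = w j1 := by rw [← e2, ← hc]; exact e1.symm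
          have hR1 : (Rf ∪ Rb).ncard ≤ k := by
            refine aux_le_k_rev h (w j1) ?_
            rintro i (hi | hi)
            · exact hRfs hi
            · exact (hRbs hi).trans e3
          have hC1 : Cb.ncard ≤ k :=
            aux_le_k h (w i0.rev) (fun j hj => cfb i0 hi0 j hj)
          have hS := aux_ncard_le_n {i | w i = w i.rev}
          omega
        · have hdC : ∀ j, j ∈ Cb → j ∉ {i | w i = w i.rev} := by
            intro j hj hm
            have e4 : w j = w i0.rev := cfb i0 hi0 j hj
            have e5 : w j.rev = w i1.rev := (cbb i1 hi1 j hj).symm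
            exact hc ((e4.symm.trans hm).trans e5)
          have h1 := aux_disj_sum_le _ _ hdC
          have h2 : (Rf ∪ Rb).ncard ≤ Rf.ncard + Rb.ncard := Set.ncard_union_le _ _
          have h3 : Rf.ncard ≤ k := aux_le_k_rev h (w j1) hRfs
          have h4 : Rb.ncard ≤ k := aux_le_k_rev h (w j1.rev) hRbs
          omega
      · -- only Rf, Cb
        rw [Set.not_nonempty_iff_eq_empty.mp hRb, Set.union_empty]
        have h1 : Rf.ncard ≤ k :=
          aux_le_k_rev h (w j1) (fun i hi => (cfb i hi j1 hj1).symm)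
        have h2 : Cb.ncard ≤ k :=
          aux_le_k h (w i0.rev) (fun j hj => cfb i0 hi0 j hj)
        have hS := aux_ncard_le_n {i | w i = w i.rev}
        omega
  · -- Rf empty
    rw [Set.not_nonempty_iff_eq_empty.mp hRf, Set.empty_union] at hR ⊢
    obtain ⟨i1, hi1⟩ := hR
    by_cases hCf : Cf.Nonempty
    · obtain ⟨j0, hj0⟩ := hCf
      by_cases hCb : Cb.Nonempty
      · -- Rb, Cf, Cb nonempty; Rf empty
        obtain ⟨j1, hj1⟩ := hCb
        have hCfs : Cf ⊆ {j | w j.rev = w i1} := fun j hj => (cbf i1 hi1 j hj).symm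
        have hCbs : Cb ⊆ {j | w j.rev = w i1.rev} := fun j hj => (cbb i1 hi1 j hj).symm
        by_cases hc : w j0.rev = w j1.rev
        · have e1 : w i1 = w j0.rev := cbf i1 hi1 j0 hj0
          have e2 : w i1.rev = w j1.rev := cbb i1 hi1 j1 hj1
          have e3 : w i1.rev = w i1 := by rw [e2, ← hc]; exact e1.symm
          have hC1 : (Cf ∪ Cb).ncard ≤ k := by
            refine aux_le_k_rev h (w i1) ?_
            rintro j (hj | hj)
            · exact hCfs hj
            · exact (hCbs hj).trans e3
          have hR1 : Rb.ncard ≤ k :=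
            aux_le_k h (w j0.rev) (fun i hi => cbf i hi j0 hj0)
          have hS := aux_ncard_le_n {i | w i = w i.rev}
          omega
        · have hdR : ∀ i, i ∈ Rb → i ∉ {i | w i = w i.rev} := by
            intro i hi hm
            have e4 : w i = w j0.rev := cbf i hi j0 hj0
            have e5 : w i.rev = w j1.rev := cbb i hi j1 hj1
            exact hc ((e4.symm.trans hm).trans e5)
          have h1 := aux_disj_sum_le _ _ hdR
          have h2 : (Cf ∪ Cb).ncard ≤ Cf.ncard + Cb.ncard := Set.ncard_union_le _ _
          have h3 : Cf.ncard ≤ k := aux_le_k_rev h (w i1) hCfs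
          have h4 : Cb.ncard ≤ k := aux_le_k_rev h (w i1.rev) hCbs
          omega
      · -- only Rb, Cf
        rw [Set.not_nonempty_iff_eq_empty.mp hCb, Set.union_empty]
        have h1 : Rb.ncard ≤ k :=
          aux_le_k h (w j0.rev) (fun i hi => cbf i hi j0 hj0)
        have h2 : Cf.ncard ≤ k :=
          aux_le_k_rev h (w i1) (fun j hj => (cbf i1 hi1 j hj).symm)
        have hS := aux_ncard_le_n {i | w i = w i.rev}
        omega
    · -- only Rb, Cb
      rw [Set.not_nonempty_iff_eq_empty.mp hCf, Set.empty_union] at hC ⊢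
      obtain ⟨j1, hj1⟩ := hC
      have h1 : Rb.ncard ≤ k :=
        aux_le_k_rev h (w j1.rev) (fun i hi => cbb i hi j1 hj1)
      have h2 : Cb.ncard ≤ k :=
        aux_le_k_rev h (w i1.rev) (fun j hj => (cbb i1 hi1 j hj).symm)
      have hS := aux_ncard_le_n {i | w i = w i.rev}
      omega

lemma core {n k : ℕ} {w : Fin n → α} (G : Fin n → Fin n → α)
    (h : ∀ a : α, {i | w i = a}.ncard ≤ k)
    (hR : {i | rowC w G i}.Nonempty) (hC : {i | colC w G i}.Nonempty) :
    {i | rowC w G i}.ncard + {i | colC w G i}.ncard + {i | w i = w i.rev}.ncard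
      ≤ n + 2 * k := by
  have hRd : {i | rowC w G i}
      = {i | ∀ j, G i j = w j} ∪ {i | ∀ j, G i j = w j.rev} := rfl
  have hCd : {i | colC w G i}
      = {i | ∀ j, G j i = w j} ∪ {i | ∀ j, G j i = w j.rev} := rfl
  rw [hRd] at hR ⊢
  rw [hCd] at hC ⊢
  exact abstract_core h _ _ _ _
    (fun i hi j hj => (hj i).symm.trans (hi j))
    (fun i hi j hj => (hi j).symm.trans (hj i))
    (fun i hi j hj => (hj i).symm.trans (hi j))
    (fun i hi j hj => (hj i).symm.trans (hi j))
    hR hC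

theorem fword_upper_sym {n k : ℕ} (hn : 2 ≤ n) (w : Fin n → α)
    (h : ∀ a : α, {i | w i = a}.ncard ≤ k)
    (s : ℕ) (hs : {i | w i = w i.rev}.ncard = s) :
    fword w ≤ max (n + 2 * k - s) n + 2 := by
  classical
  subst hs
  refine csSup_le ⟨count w (fun _ j => w j), fun _ j => w j, rfl⟩ ?_
  rintro m ⟨G, rfl⟩
  unfold count
  have hmain : {i | rowC w G i}.ncard + {i | colC w G i}.ncard
      ≤ max (n + 2 * k - {i | w i = w i.rev}.ncard) n := by
    rcases Set.eq_empty_or_nonempty {i | rowC w G i} with hRe | hRne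
    · rw [hRe, Set.ncard_empty, zero_add]
      exact (aux_ncard_le_n _).trans (le_max_right _ _)
    · rcases Set.eq_empty_or_nonempty {i | colC w G i} with hCe | hCne
      · rw [hCe, Set.ncard_empty, add_zero]
        exact (aux_ncard_le_n _).trans (le_max_right _ _)
      · have hcore := core G h hRne hCne
        have h2 : {i | rowC w G i}.ncard + {i | colC w G i}.ncard
            ≤ n + 2 * k - {i | w i = w i.rev}.ncard := by omega
        exact h2.trans (le_max_left _ _)
  have ht1 : (if diagC w G then 1 else 0) ≤ 1 := by split <;> omega
  have ht2 : (if adiagC w G then 1 else 0) ≤ 1 := by split <;> omega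
  have hfin := add_le_add (add_le_add hmain ht1) ht2
  linarith

end WordGrid
end

section
/- Let n ≥ 2, let d be a positive integer, and let w be a word of length n such that w_i ≠ w_{n-i+1} for some index i. Then f(w,d) ≤ (1/4)((n+2)^d − (n−2)^d). -/
namespace WordGridHD

variable {α : Type*}

private lemma no_opp {d : ℕ} {v v' : Fin d → ℤ}
    (hopp : ∀ k, v k + v' k = 0)
    (hv : ∃ j, v j = 1 ∧ ∀ j' < j, v j' = 0)
    (hv' : ∃ j, v' j = 1 ∧ ∀ j' < j, v' j' = 0) : False := by
  obtain ⟨j, hj1, hj0⟩ := hv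
  obtain ⟨j', hj'1, hj'0⟩ := hv'
  rcases lt_trichotomy j j' with h | h | h
  · have h1 := hj'0 j h; have h2 := hopp j; omega
  · subst h; have h2 := hopp j; omega
  · have h1 := hj0 j' h; have h2 := hopp j'; omega

/-- Core counting estimate: the number of "anchored pairs" `(a,b)` in the grid whose
coordinates agree or form the swap `{I, I'}`, with `a` of type `X` and `b` of type `Y`
(mutually exclusive types), is at most `((n+2)^d - (n-2)^d)/4`. -/
private lemma pairs_card {d n : ℕ} (hn : 2 ≤ n) {I I' : ℤ}
    (hII' : I ≠ I') (hI1 : 1 ≤ I) (hIn : I ≤ n) (hI'1 : 1 ≤ I') (hI'n : I' ≤ n)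
    (PX PY : (Fin d → ℤ) → Prop) [DecidablePred PX] [DecidablePred PY]
    (hdisj : ∀ a, PX a → PY a → False) :
    4 * ((Fintype.piFinset (fun _ : Fin d => Finset.Icc (1:ℤ) n) ×ˢ
          Fintype.piFinset (fun _ : Fin d => Finset.Icc (1:ℤ) n)).filter
          (fun ab => (∀ k, ab.1 k = ab.2 k ∨ (ab.1 k = I ∧ ab.2 k = I')
              ∨ (ab.1 k = I' ∧ ab.2 k = I))
            ∧ PX ab.1 ∧ PY ab.2)).card + (n-2)^d ≤ (n+2)^d := by
  classical
  set Pts : Finset (Fin d → ℤ) := Fintype.piFinset (fun _ : Fin d => Finset.Icc (1:ℤ) n)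
    with hPts
  set Pp := (Pts ×ˢ Pts).filter
      (fun ab : (Fin d → ℤ) × (Fin d → ℤ) =>
        (∀ k, ab.1 k = ab.2 k ∨ (ab.1 k = I ∧ ab.2 k = I') ∨ (ab.1 k = I' ∧ ab.2 k = I))
        ∧ PX ab.1 ∧ PY ab.2) with hPp
  -- the "cube data" of a point
  set cm : (Fin d → ℤ) → (Fin d → ℤ) := fun a k => if a k = I ∨ a k = I' then 0 else a k
    with hcm
  set W : (Fin d → ℤ) → ℕ := fun c => ∏ k : Fin d, (if c k = 0 then 4 else 1) with hW
  set S' : Finset ℤ := (Finset.Icc (1:ℤ) n) \ {I, I'} with hS'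
  have hS'card : S'.card = n - 2 := by
    rw [hS', Finset.card_sdiff_of_subset]
    · have h2 : ({I, I'} : Finset ℤ).card = 2 := by
        rw [Finset.card_insert_of_notMem (by simp [hII']), Finset.card_singleton]
      have hIcc : (Finset.Icc (1:ℤ) (n:ℤ)).card = n := by
        rw [Int.card_Icc]
        have : ((n:ℤ) + 1 - 1) = (n : ℤ) := by ring
        rw [this, Int.toNat_natCast]
      rw [h2, hIcc]
    · intro x hx
      simp only [Finset.mem_insert, Finset.mem_singleton] at hx
      rcases hx with rfl | rfl <;> simp [Finset.mem_Icc] <;> omega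
  set Cubes : Finset (Fin d → ℤ) := Fintype.piFinset (fun _ : Fin d => insert (0:ℤ) S')
    with hCubes
  -- step B : each fiber of cm is small
  have stepB : ∀ c : Fin d → ℤ,
      4 * (Pp.filter (fun ab => cm ab.1 = c)).card ≤ W c := by
    intro c
    set Xc := Pts.filter (fun a => cm a = c ∧ PX a) with hXc
    set Yc := Pts.filter (fun a => cm a = c ∧ PY a) with hYc
    set Kc : Finset (Fin d → ℤ) :=
      Fintype.piFinset (fun k => if c k = 0 then ({I, I'} : Finset ℤ) else {c k}) with hKc
    have hsub : Pp.filter (fun ab => cm ab.1 = c) ⊆ Xc ×ˢ Yc := by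
      intro ab hab
      rw [Finset.mem_filter] at hab
      obtain ⟨habPp, habc⟩ := hab
      rw [hPp, Finset.mem_filter, Finset.mem_product] at habPp
      obtain ⟨⟨ha, hb⟩, hSC, hPXa, hPYb⟩ := habPp
      have hcb : cm ab.2 = c := by
        rw [← habc]
        funext k
        simp only [hcm]
        rcases hSC k with h | h | h
        · rw [h]
        · rw [if_pos (Or.inr h.2), if_pos (Or.inl h.1)]
        · rw [if_pos (Or.inl h.2), if_pos (Or.inr h.1)]
      rw [Finset.mem_product]
      exact ⟨Finset.mem_filter.mpr ⟨ha, habc, hPXa⟩,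
             Finset.mem_filter.mpr ⟨hb, hcb, hPYb⟩⟩
    have hXK : Xc ⊆ Kc := by
      intro a ha
      rw [hXc, Finset.mem_filter] at ha
      obtain ⟨haPts, hac, _⟩ := ha
      rw [hKc, Fintype.mem_piFinset]
      intro k
      have hak : a k ∈ Finset.Icc (1:ℤ) n := by
        rw [hPts, Fintype.mem_piFinset] at haPts; exact haPts k
      rw [Finset.mem_Icc] at hak
      by_cases hck : c k = 0
      · rw [if_pos hck]
        by_contra hmem
        simp only [Finset.mem_insert, Finset.mem_singleton] at hmem
        push_neg at hmem
        have : cm a k = a k := by simp only [hcm]; rw [if_neg (by tauto)]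
        rw [hac] at this
        omega
      · rw [if_neg hck, Finset.mem_singleton]
        by_cases hI : a k = I ∨ a k = I'
        · exfalso; apply hck
          have : cm a k = 0 := by simp only [hcm]; rw [if_pos hI]
          rw [hac] at this; omega
        · have : cm a k = a k := by simp only [hcm]; rw [if_neg hI]
          rw [hac] at this; omega
    have hYK : Yc ⊆ Kc := by
      intro a ha
      rw [hYc, Finset.mem_filter] at ha
      obtain ⟨haPts, hac, _⟩ := ha
      rw [hKc, Fintype.mem_piFinset]
      intro k
      have hak : a k ∈ Finset.Icc (1:ℤ) n := by
        rw [hPts, Fintype.mem_piFinset] at haPts; exact haPts k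
      rw [Finset.mem_Icc] at hak
      by_cases hck : c k = 0
      · rw [if_pos hck]
        by_contra hmem
        simp only [Finset.mem_insert, Finset.mem_singleton] at hmem
        push_neg at hmem
        have : cm a k = a k := by simp only [hcm]; rw [if_neg (by tauto)]
        rw [hac] at this
        omega
      · rw [if_neg hck, Finset.mem_singleton]
        by_cases hI : a k = I ∨ a k = I'
        · exfalso; apply hck
          have : cm a k = 0 := by simp only [hcm]; rw [if_pos hI]
          rw [hac] at this; omega
        · have : cm a k = a k := by simp only [hcm]; rw [if_neg hI]
          rw [hac] at this; omega
    have hdXY : Disjoint Xc Yc := by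
      rw [Finset.disjoint_left]
      intro a haX haY
      rw [hXc, Finset.mem_filter] at haX
      rw [hYc, Finset.mem_filter] at haY
      exact hdisj a haX.2.2 haY.2.2
    have hKcard : Kc.card = ∏ k : Fin d, (if c k = 0 then 2 else 1) := by
      rw [hKc, Fintype.card_piFinset]
      apply Finset.prod_congr rfl
      intro k _
      by_cases hck : c k = 0
      · rw [if_pos hck, if_pos hck,
          Finset.card_insert_of_notMem (by simp [hII']), Finset.card_singleton]
      · rw [if_neg hck, if_neg hck, Finset.card_singleton]
    have hKW : Kc.card * Kc.card = W c := by
      rw [hKcard, hW, ← Finset.prod_mul_distrib]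
      apply Finset.prod_congr rfl
      intro k _
      by_cases hck : c k = 0 <;> simp [hck]
    have hXY : Xc.card + Yc.card ≤ Kc.card := by
      rw [← Finset.card_union_of_disjoint hdXY]
      exact Finset.card_le_card (Finset.union_subset hXK hYK)
    calc 4 * (Pp.filter (fun ab => cm ab.1 = c)).card
        ≤ 4 * (Xc ×ˢ Yc).card := by
          exact Nat.mul_le_mul_left _ (Finset.card_le_card hsub)
      _ = 4 * (Xc.card * Yc.card) := by rw [Finset.card_product]
      _ ≤ (Xc.card + Yc.card) * (Xc.card + Yc.card) := by
          zify; nlinarith [sq_nonneg ((Xc.card : ℤ) - (Yc.card : ℤ))]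
      _ ≤ Kc.card * Kc.card := Nat.mul_le_mul hXY hXY
      _ = W c := hKW
  -- step C : the image of the cube map lies in the cubes having a 0 coordinate
  have stepC : Pp.image (fun ab => cm ab.1) ⊆ Cubes.filter (fun c => ∃ k, c k = 0) := by
    intro c hc
    rw [Finset.mem_image] at hc
    obtain ⟨ab, habPp, rfl⟩ := hc
    rw [hPp, Finset.mem_filter, Finset.mem_product] at habPp
    obtain ⟨⟨ha, hb⟩, hSC, hPXa, hPYb⟩ := habPp
    rw [Finset.mem_filter]
    constructor
    · rw [hCubes, Fintype.mem_piFinset]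
      intro k
      by_cases hI : ab.1 k = I ∨ ab.1 k = I'
      · have : cm ab.1 k = 0 := by simp only [hcm]; rw [if_pos hI]
        rw [this]; exact Finset.mem_insert_self _ _
      · have heq : cm ab.1 k = ab.1 k := by simp only [hcm]; rw [if_neg hI]
        rw [heq]
        apply Finset.mem_insert_of_mem
        rw [hS', Finset.mem_sdiff]
        constructor
        · rw [hPts, Fintype.mem_piFinset] at ha; exact ha k
        · simp only [Finset.mem_insert, Finset.mem_singleton]; tauto
    · have hne : ab.1 ≠ ab.2 := by
        intro h
        exact hdisj ab.1 hPXa (h ▸ hPYb)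
      have : ∃ k, ab.1 k ≠ ab.2 k := by
        by_contra hcon
        push_neg at hcon
        exact hne (funext hcon)
      obtain ⟨k, hk⟩ := this
      refine ⟨k, ?_⟩
      rcases hSC k with h | h | h
      · exact absurd h hk
      · simp only [hcm]; rw [if_pos (Or.inl h.1)]
      · simp only [hcm]; rw [if_pos (Or.inr h.1)]
  -- step D : the weighted count of cubes
  have hsum_all : ∑ c ∈ Cubes, W c = (n+2)^d := by
    have h1 : ∀ k : Fin d, ∑ x ∈ insert (0:ℤ) S', (if x = 0 then 4 else 1) = n + 2 := by
      intro k
      have h0 : (0:ℤ) ∉ S' := by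
        rw [hS', Finset.mem_sdiff, Finset.mem_Icc]
        push_neg
        intro h; omega
      rw [Finset.sum_insert h0, if_pos rfl]
      have : ∀ x ∈ S', (if x = (0:ℤ) then 4 else 1) = 1 := by
        intro x hx
        rw [if_neg]
        intro h
        subst h
        exact h0 hx
      rw [Finset.sum_congr rfl this, Finset.sum_const, smul_eq_mul, mul_one, hS'card]
      omega
    have h2 := Finset.prod_univ_sum (fun _ : Fin d => insert (0:ℤ) S')
      (fun _ x => if x = 0 then (4:ℕ) else 1)
    rw [hCubes, hW]
    rw [← h2]
    rw [Finset.prod_congr rfl (fun k _ => h1 k), Finset.prod_const, Finset.card_univ,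
      Fintype.card_fin]
  have hsum_nz : ∑ c ∈ Cubes.filter (fun c => ¬ ∃ k, c k = 0), W c = (n-2)^d := by
    have hset : Cubes.filter (fun c => ¬ ∃ k, c k = 0)
        = Fintype.piFinset (fun _ : Fin d => S') := by
      ext c
      rw [Finset.mem_filter, hCubes, Fintype.mem_piFinset, Fintype.mem_piFinset]
      constructor
      · rintro ⟨hmem, hnz⟩
        push_neg at hnz
        intro k
        rcases Finset.mem_insert.mp (hmem k) with h | h
        · exact absurd h (hnz k)
        · exact h
      · intro h
        constructor
        · exact fun k => Finset.mem_insert_of_mem (h k)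
        · push_neg
          intro k hk
          have := h k
          rw [hk, hS', Finset.mem_sdiff, Finset.mem_Icc] at this
          omega
    rw [hset]
    have hone : ∀ c ∈ Fintype.piFinset (fun _ : Fin d => S'), W c = 1 := by
      intro c hc
      rw [Fintype.mem_piFinset] at hc
      rw [hW]
      apply Finset.prod_eq_one
      intro k _
      rw [if_neg]
      intro h
      have := hc k
      rw [h, hS', Finset.mem_sdiff, Finset.mem_Icc] at this
      omega
    rw [Finset.sum_congr rfl hone, Finset.sum_const, smul_eq_mul, mul_one,
      Fintype.card_piFinset]
    rw [Finset.prod_congr rfl (fun k _ => hS'card), Finset.prod_const, Finset.card_univ,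
      Fintype.card_fin]
  -- assemble
  have hfib : Pp.card = ∑ c ∈ Pp.image (fun ab => cm ab.1),
      (Pp.filter (fun ab => cm ab.1 = c)).card :=
    Finset.card_eq_sum_card_fiberwise (fun x hx => Finset.mem_image_of_mem _ hx)
  have hmain : 4 * Pp.card ≤ ∑ c ∈ Cubes.filter (fun c => ∃ k, c k = 0), W c := by
    calc 4 * Pp.card
        = ∑ c ∈ Pp.image (fun ab => cm ab.1),
            4 * (Pp.filter (fun ab => cm ab.1 = c)).card := by
          rw [hfib, Finset.mul_sum]
      _ ≤ ∑ c ∈ Pp.image (fun ab => cm ab.1), W c :=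
          Finset.sum_le_sum (fun c _ => stepB c)
      _ ≤ ∑ c ∈ Cubes.filter (fun c => ∃ k, c k = 0), W c :=
          Finset.sum_le_sum_of_subset stepC
  have hsplit : ∑ c ∈ Cubes.filter (fun c => ∃ k, c k = 0), W c
      + ∑ c ∈ Cubes.filter (fun c => ¬ ∃ k, c k = 0), W c = ∑ c ∈ Cubes, W c :=
    Finset.sum_filter_add_sum_filter_not _ _ _
  have h1 : ∑ c ∈ Cubes.filter (fun c => ∃ k, c k = 0), W c + (n-2)^d = (n+2)^d := by
    rw [← hsum_all, ← hsum_nz]; exact hsplit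
  exact h1 ▸ Nat.add_le_add_right hmain ((n-2)^d)

private lemma count_le {n : ℕ} (hn : 2 ≤ n) (w : Fin n → α) (i : Fin n)
    (hi : w i ≠ w i.rev) {d : ℕ} (G : (Fin d → ℤ) → α) :
    4 * count d w G + (n - 2) ^ d ≤ (n + 2) ^ d := by
  classical
  have hi_lt : (i : ℕ) < n := i.isLt
  have hirev_lt : (i.rev : ℕ) < n := i.rev.isLt
  have hrevZ : ((i.rev : ℕ) : ℤ) = (n : ℤ) - 1 - ((i : ℕ) : ℤ) := by
    rw [Fin.val_rev, Nat.cast_sub (by omega : (i : ℕ) + 1 ≤ n)]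
    push_cast
    ring
  have hine : i ≠ i.rev := fun h => hi (by rw [← h])
  have hvne : ((i : ℕ) : ℤ) ≠ ((i.rev : ℕ) : ℤ) := by
    intro h
    exact hine (Fin.val_injective (by exact_mod_cast h))
  have hII' : ((i : ℕ) : ℤ) + 1 ≠ ((i.rev : ℕ) : ℤ) + 1 := by omega
  set PX : (Fin d → ℤ) → Prop := fun a => G a = w i with hPX
  set PY : (Fin d → ℤ) → Prop := fun a => G a = w i.rev with hPY
  have hdisj : ∀ a, PX a → PY a → False := by
    intro a h1 h2
    exact hi (h1 ▸ h2 ▸ rfl)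
  have hbound := pairs_card (d := d) hn hII'
    (by omega) (by omega) (by omega) (by omega) PX PY hdisj
  set Pfin := (Fintype.piFinset (fun _ : Fin d => Finset.Icc (1:ℤ) n) ×ˢ
          Fintype.piFinset (fun _ : Fin d => Finset.Icc (1:ℤ) n)).filter
          (fun ab => (∀ k, ab.1 k = ab.2 k
              ∨ (ab.1 k = ((i : ℕ) : ℤ) + 1 ∧ ab.2 k = ((i.rev : ℕ) : ℤ) + 1)
              ∨ (ab.1 k = ((i.rev : ℕ) : ℤ) + 1 ∧ ab.2 k = ((i : ℕ) : ℤ) + 1))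
            ∧ PX ab.1 ∧ PY ab.2) with hPfin
  have hcount : count d w G ≤ Pfin.card := by
    set S : Set ((Fin d → ℤ) × (Fin d → ℤ)) :=
      {pv | IsCanonLine n d pv.1 pv.2 ∧ lineC w G pv.1 pv.2} with hS
    set Ψ : ((Fin d → ℤ) × (Fin d → ℤ)) → ((Fin d → ℤ) × (Fin d → ℤ)) :=
      fun pv => if (∀ r : Fin n, G (fun j => pv.1 j + (r : ℕ) * pv.2 j) = w r)
        then (fun k => pv.1 k + ((i : ℕ) : ℤ) * pv.2 k,
              fun k => pv.1 k + ((i.rev : ℕ) : ℤ) * pv.2 k)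
        else (fun k => pv.1 k + ((i.rev : ℕ) : ℤ) * pv.2 k,
              fun k => pv.1 k + ((i : ℕ) : ℤ) * pv.2 k) with hΨ
    have hmaps : ∀ pv ∈ S, Ψ pv ∈ (↑Pfin : Set ((Fin d → ℤ) × (Fin d → ℤ))) := by
      intro pv hpv
      obtain ⟨⟨hv1, hv2, hb⟩, hl⟩ := hpv
      have hAmem : (fun k => pv.1 k + ((i : ℕ) : ℤ) * pv.2 k)
          ∈ Fintype.piFinset (fun _ : Fin d => Finset.Icc (1:ℤ) n) := by
        rw [Fintype.mem_piFinset]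
        intro k
        rw [Finset.mem_Icc]
        exact hb (i : ℕ) hi_lt k
      have hBmem : (fun k => pv.1 k + ((i.rev : ℕ) : ℤ) * pv.2 k)
          ∈ Fintype.piFinset (fun _ : Fin d => Finset.Icc (1:ℤ) n) := by
        rw [Fintype.mem_piFinset]
        intro k
        rw [Finset.mem_Icc]
        exact hb (i.rev : ℕ) hirev_lt k
      have hcoord : ∀ k,
          (pv.1 k + ((i : ℕ) : ℤ) * pv.2 k = pv.1 k + ((i.rev : ℕ) : ℤ) * pv.2 k)
          ∨ (pv.1 k + ((i : ℕ) : ℤ) * pv.2 k = ((i : ℕ) : ℤ) + 1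
              ∧ pv.1 k + ((i.rev : ℕ) : ℤ) * pv.2 k = ((i.rev : ℕ) : ℤ) + 1)
          ∨ (pv.1 k + ((i : ℕ) : ℤ) * pv.2 k = ((i.rev : ℕ) : ℤ) + 1
              ∧ pv.1 k + ((i.rev : ℕ) : ℤ) * pv.2 k = ((i : ℕ) : ℤ) + 1) := by
        intro k
        have h0 := hb 0 (by omega) k
        have h1 := hb (n - 1) (by omega) k
        rw [Nat.cast_zero, zero_mul, add_zero] at h0
        rw [Nat.cast_sub (by omega : 1 ≤ n), Nat.cast_one] at h1
        rcases hv1 k with hvk | hvk | hvk <;>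
          [ (have e1 : ((i : ℕ) : ℤ) * pv.2 k = 0 - ((i : ℕ) : ℤ) := by rw [hvk]; ring);
            (have e1 : ((i : ℕ) : ℤ) * pv.2 k = 0 := by rw [hvk]; ring);
            (have e1 : ((i : ℕ) : ℤ) * pv.2 k = ((i : ℕ) : ℤ) := by rw [hvk]; ring)] <;>
          [ (have e2 : ((i.rev : ℕ) : ℤ) * pv.2 k = 0 - ((i.rev : ℕ) : ℤ) := by
              rw [hvk]; ring);
            (have e2 : ((i.rev : ℕ) : ℤ) * pv.2 k = 0 := by rw [hvk]; ring);
            (have e2 : ((i.rev : ℕ) : ℤ) * pv.2 k = ((i.rev : ℕ) : ℤ) := by rw [hvk]; ring)] <;>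
          [ (have e3 : ((n : ℤ) - 1) * pv.2 k = 0 - ((n : ℤ) - 1) := by rw [hvk]; ring);
            (have e3 : ((n : ℤ) - 1) * pv.2 k = 0 := by rw [hvk]; ring);
            (have e3 : ((n : ℤ) - 1) * pv.2 k = 0 + ((n : ℤ) - 1) := by rw [hvk]; ring)] <;>
          rw [e1, e2] <;> rw [e3] at h1 <;> omega
      rw [Finset.mem_coe, hPfin, Finset.mem_filter, Finset.mem_product]
      by_cases hf : (∀ r : Fin n, G (fun j => pv.1 j + (r : ℕ) * pv.2 j) = w r)
      · rw [hΨ]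
        simp only [if_pos hf]
        refine ⟨⟨hAmem, hBmem⟩, ?_, hf i, hf i.rev⟩
        exact hcoord
      · have hbwd := hl.resolve_left hf
        rw [hΨ]
        simp only [if_neg hf]
        refine ⟨⟨hBmem, hAmem⟩, ?_, ?_, hbwd i⟩
        · intro k
          rcases hcoord k with h | h | h
          · exact Or.inl h.symm
          · exact Or.inr (Or.inr ⟨h.2, h.1⟩)
          · exact Or.inr (Or.inl ⟨h.2, h.1⟩)
        · have := hbwd i.rev
          rwa [Fin.rev_rev] at this
    have hinj : Set.InjOn Ψ S := by
      intro pv hpv pv' hpv' heq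
      obtain ⟨⟨_, hv2, _⟩, _⟩ := hpv
      obtain ⟨⟨_, hv2', _⟩, _⟩ := hpv'
      rw [hΨ] at heq
      by_cases hf : (∀ r : Fin n, G (fun j => pv.1 j + (r : ℕ) * pv.2 j) = w r) <;>
        by_cases hf' : (∀ r : Fin n, G (fun j => pv'.1 j + (r : ℕ) * pv'.2 j) = w r)
      · simp only [if_pos hf, if_pos hf'] at heq
        have hvv : pv.2 = pv'.2 := by
          funext k
          have e1 := congrFun (congrArg Prod.fst heq) k
          have e2 := congrFun (congrArg Prod.snd heq) k
          simp only at e1 e2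
          have e3 : (((i.rev : ℕ) : ℤ) - ((i : ℕ) : ℤ)) * (pv.2 k - pv'.2 k) = 0 := by
            linear_combination e2 - e1
          rcases mul_eq_zero.mp e3 with h | h
          · omega
          · omega
        have hpp : pv.1 = pv'.1 := by
          funext k
          have e1 := congrFun (congrArg Prod.fst heq) k
          simp only at e1
          rw [hvv] at e1
          linarith
        exact Prod.ext hpp hvv
      · simp only [if_pos hf, if_neg hf'] at heq
        exfalso
        apply no_opp (v := pv.2) (v' := pv'.2) ?_ hv2 hv2'
        intro k
        have e1 := congrFun (congrArg Prod.fst heq) k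
        have e2 := congrFun (congrArg Prod.snd heq) k
        simp only at e1 e2
        have e3 : (((i.rev : ℕ) : ℤ) - ((i : ℕ) : ℤ)) * (pv.2 k + pv'.2 k) = 0 := by
          linear_combination e2 - e1
        rcases mul_eq_zero.mp e3 with h | h
        · omega
        · omega
      · simp only [if_neg hf, if_pos hf'] at heq
        exfalso
        apply no_opp (v := pv.2) (v' := pv'.2) ?_ hv2 hv2'
        intro k
        have e1 := congrFun (congrArg Prod.fst heq) k
        have e2 := congrFun (congrArg Prod.snd heq) k
        simp only at e1 e2
        have e3 : (((i.rev : ℕ) : ℤ) - ((i : ℕ) : ℤ)) * (pv.2 k + pv'.2 k) = 0 := by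
          linear_combination e1 - e2
        rcases mul_eq_zero.mp e3 with h | h
        · omega
        · omega
      · simp only [if_neg hf, if_neg hf'] at heq
        have hvv : pv.2 = pv'.2 := by
          funext k
          have e1 := congrFun (congrArg Prod.fst heq) k
          have e2 := congrFun (congrArg Prod.snd heq) k
          simp only at e1 e2
          have e3 : (((i.rev : ℕ) : ℤ) - ((i : ℕ) : ℤ)) * (pv.2 k - pv'.2 k) = 0 := by
            linear_combination e1 - e2
          rcases mul_eq_zero.mp e3 with h | h
          · omega
          · omega
        have hpp : pv.1 = pv'.1 := by
          funext k
          have e1 := congrFun (congrArg Prod.fst heq) k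
          simp only at e1
          rw [hvv] at e1
          linarith
        exact Prod.ext hpp hvv
    have himg : Ψ '' S ⊆ (↑Pfin : Set ((Fin d → ℤ) × (Fin d → ℤ))) := by
      rintro x ⟨pv, hpv, rfl⟩
      exact hmaps pv hpv
    calc count d w G = S.ncard := rfl
      _ = (Ψ '' S).ncard := (Set.ncard_image_of_injOn hinj).symm
      _ ≤ (↑Pfin : Set ((Fin d → ℤ) × (Fin d → ℤ))).ncard :=
          Set.ncard_le_ncard himg Pfin.finite_toSet
      _ = Pfin.card := Set.ncard_coe_finset _
  have hmul : 4 * count d w G ≤ 4 * Pfin.card := Nat.mul_le_mul_left _ hcount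
  exact le_trans (Nat.add_le_add_right hmul _) hbound

theorem nonpalindrome_upper_hd {n : ℕ} (hn : 2 ≤ n) (w : Fin n → α)
    (hnp : ∃ i, w i ≠ w i.rev) (d : ℕ) (hd : 1 ≤ d) :
    4 * fword w d ≤ (n + 2) ^ d - (n - 2) ^ d := by
  obtain ⟨i, hi⟩ := hnp
  have key : ∀ G : (Fin d → ℤ) → α, 4 * count d w G + (n - 2) ^ d ≤ (n + 2) ^ d :=
    fun G => count_le hn w i hi G
  have hub : fword w d ≤ ((n + 2) ^ d - (n - 2) ^ d) / 4 := by
    apply csSup_le'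
    rintro m ⟨G, rfl⟩
    rw [Nat.le_div_iff_mul_le (by norm_num)]
    have h := key G
    omega
  calc 4 * fword w d ≤ 4 * (((n + 2) ^ d - (n - 2) ^ d) / 4) := Nat.mul_le_mul_left _ hub
    _ = (((n + 2) ^ d - (n - 2) ^ d) / 4) * 4 := Nat.mul_comm _ _
    _ ≤ (n + 2) ^ d - (n - 2) ^ d := Nat.div_mul_le_self _ _

end WordGridHD
end

section
/- Let w be a word of length k ≥ 2 and let n ≥ k. Then f(w,n,1)·(3n − 4k) ≤ f(w,n,2) ≤ f(w,n,1)·2n + 4·∑_{i=k}^{n} f(w,i,1). -/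
namespace ShortWordGrid

variable {α : Type*}

/-- `(p; v)` is the canonical pair of a line of length `k` in the grid `[n]^d`: all entries
of `v` lie in `{-1, 0, +1}`, the first nonzero entry of `v` is `+1`, and all the points
`p, p + v, …, p + (k-1)v` have all coordinates in `[n] = {1, …, n}`. -/
def IsCanonLine (n k d : ℕ) (p v : Fin d → ℤ) : Prop :=
  (∀ j, v j = -1 ∨ v j = 0 ∨ v j = 1) ∧
  (∃ j, v j = 1 ∧ ∀ j' < j, v j' = 0) ∧
  (∀ i : ℕ, i < k → ∀ j, 1 ≤ p j + i * v j ∧ p j + i * v j ≤ n)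

/-- The line of length `k` with canonical pair `(p; v)` contains the word `w`
(forwards or backwards) in the grid `G`. -/
def lineC {k : ℕ} (d : ℕ) (w : Fin k → α) (G : (Fin d → ℤ) → α) (p v : Fin d → ℤ) : Prop :=
  (∀ i : Fin k, G (fun j => p j + (i : ℕ) * v j) = w i) ∨
  (∀ i : Fin k, G (fun j => p j + (i : ℕ) * v j) = w i.rev)

/-- `f(w,G)`: the number of lines of length `k` in `[n]^d` containing `w` in the grid `G`. -/
noncomputable def count {k : ℕ} (n d : ℕ) (w : Fin k → α) (G : (Fin d → ℤ) → α) : ℕ :=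
  {pv : (Fin d → ℤ) × (Fin d → ℤ) |
    IsCanonLine n k d pv.1 pv.2 ∧ lineC d w G pv.1 pv.2}.ncard

/-- `f(w,n,d)`: the maximum of `f(w,G)` over all `(n,d)`-grids `G`. -/
noncomputable def fword {k : ℕ} (w : Fin k → α) (n d : ℕ) : ℕ :=
  sSup {m | ∃ G : (Fin d → ℤ) → α, count n d w G = m}

/-! ### Infrastructure -/

def lineSet {k : ℕ} (n d : ℕ) (w : Fin k → α) (G : (Fin d → ℤ) → α) :
    Set ((Fin d → ℤ) × (Fin d → ℤ)) :=
  {pv | IsCanonLine n k d pv.1 pv.2 ∧ lineC d w G pv.1 pv.2}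

lemma count_eq {k : ℕ} (n d : ℕ) (w : Fin k → α) (G : (Fin d → ℤ) → α) :
    count n d w G = (lineSet n d w G).ncard := rfl

lemma canon_finite {n k d : ℕ} (hk : 0 < k) :
    {pv : (Fin d → ℤ) × (Fin d → ℤ) | IsCanonLine n k d pv.1 pv.2}.Finite := by
  have h1 : (Set.univ.pi fun _ : Fin d => Set.Icc (1 : ℤ) n).Finite :=
    Set.Finite.pi fun _ => Set.finite_Icc _ _
  have h2 : (Set.univ.pi fun _ : Fin d => Set.Icc (-1 : ℤ) 1).Finite :=
    Set.Finite.pi fun _ => Set.finite_Icc _ _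
  apply (h1.prod h2).subset
  rintro ⟨p, v⟩ ⟨hv, _, hpt⟩
  constructor
  · intro j _
    have := hpt 0 hk j
    simpa using this
  · intro j _
    rcases hv j with h | h | h <;> simp only [Set.mem_Icc, Prod.snd] at h ⊢ <;> omega

lemma lineSet_finite {k : ℕ} (hk : 0 < k) (n d : ℕ) (w : Fin k → α) (G : (Fin d → ℤ) → α) :
    (lineSet n d w G).Finite :=
  (canon_finite hk).subset fun _ h => h.1

lemma count_le {k : ℕ} (hk : 0 < k) (n d : ℕ) (w : Fin k → α) (G : (Fin d → ℤ) → α) :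
    count n d w G ≤ {pv : (Fin d → ℤ) × (Fin d → ℤ) | IsCanonLine n k d pv.1 pv.2}.ncard :=
  Set.ncard_le_ncard (fun _ h => h.1) (canon_finite hk)

lemma fword_bdd {k : ℕ} (hk : 0 < k) (w : Fin k → α) (n d : ℕ) :
    BddAbove {m | ∃ G : (Fin d → ℤ) → α, count n d w G = m} := by
  refine ⟨{pv : (Fin d → ℤ) × (Fin d → ℤ) | IsCanonLine n k d pv.1 pv.2}.ncard, ?_⟩
  rintro m ⟨G, rfl⟩
  exact count_le hk n d w G

lemma count_le_fword {k : ℕ} (hk : 0 < k) (w : Fin k → α) (n d : ℕ) (G : (Fin d → ℤ) → α) :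
    count n d w G ≤ fword w n d :=
  le_csSup (fword_bdd hk w n d) ⟨G, rfl⟩

lemma exists_optimal {k : ℕ} (hk : 0 < k) (w : Fin k → α) (n d : ℕ) :
    ∃ G : (Fin d → ℤ) → α, count n d w G = fword w n d := by
  have hne : {m | ∃ G : (Fin d → ℤ) → α, count n d w G = m}.Nonempty :=
    ⟨_, fun _ => w ⟨0, hk⟩, rfl⟩
  exact Nat.sSup_mem hne (fword_bdd hk w n d)

lemma fword_le {k : ℕ} (hk : 0 < k) (w : Fin k → α) (n d : ℕ) {B : ℕ}
    (h : ∀ G : (Fin d → ℤ) → α, count n d w G ≤ B) : fword w n d ≤ B := by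
  refine csSup_le ⟨_, fun _ => w ⟨0, hk⟩, rfl⟩ ?_
  rintro m ⟨G, rfl⟩
  exact h G

lemma ncard_le_sum_counts {k : ℕ} {w : Fin k → α} (hk : 0 < k)
    (S : Set ((Fin 2 → ℤ) × (Fin 2 → ℤ))) (hS : S.Finite)
    (I : Finset ℤ) (key : ((Fin 2 → ℤ) × (Fin 2 → ℤ)) → ℤ)
    (φ : ℤ → ((Fin 2 → ℤ) × (Fin 2 → ℤ)) → ((Fin 1 → ℤ) × (Fin 1 → ℤ)))
    (m : ℤ → ℕ) (H : ℤ → (Fin 1 → ℤ) → α)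
    (h1 : ∀ pv ∈ S, key pv ∈ I)
    (h2 : ∀ pv ∈ S, φ (key pv) pv ∈ lineSet (m (key pv)) 1 w (H (key pv)))
    (h3 : ∀ c, ∀ pv ∈ S, ∀ pv' ∈ S, key pv = c → key pv' = c → φ c pv = φ c pv' → pv = pv') :
    S.ncard ≤ ∑ c ∈ I, count (m c) 1 w (H c) := by
  classical
  rw [Set.ncard_eq_toFinset_card _ hS]
  calc hS.toFinset.card
      ≤ (I.biUnion fun c => hS.toFinset.filter (fun pv => key pv = c)).card := by
        apply Finset.card_le_card
        intro pv hpv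
        simp only [Finset.mem_biUnion]
        exact ⟨key pv, h1 pv (hS.mem_toFinset.mp hpv), Finset.mem_filter.mpr ⟨hpv, rfl⟩⟩
    _ ≤ ∑ c ∈ I, (hS.toFinset.filter (fun pv => key pv = c)).card := Finset.card_biUnion_le
    _ ≤ ∑ c ∈ I, count (m c) 1 w (H c) := by
        apply Finset.sum_le_sum
        intro c _
        have hinj : Set.InjOn (φ c) ↑(hS.toFinset.filter fun pv => key pv = c) := by
          intro x hx y hy hxy
          simp only [Finset.coe_filter, Set.mem_setOf_eq, Set.Finite.mem_toFinset] at hx hy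
          exact h3 c x hx.1 y hy.1 hx.2 hy.2 hxy
        rw [← Finset.card_image_of_injOn hinj, count_eq,
          Set.ncard_eq_toFinset_card _ (lineSet_finite hk (m c) 1 w (H c))]
        apply Finset.card_le_card
        intro q hq
        simp only [Finset.mem_image] at hq
        obtain ⟨pv, hpv, rfl⟩ := hq
        simp only [Finset.mem_filter, Set.Finite.mem_toFinset] at hpv
        rw [Set.Finite.mem_toFinset]
        obtain ⟨hpvS, hkey⟩ := hpv
        have := h2 pv hpvS
        rwa [hkey] at this

lemma mul_le_ncard {S1 : Set ((Fin 1 → ℤ) × (Fin 1 → ℤ))} (hS1 : S1.Finite)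
    {S2 : Set ((Fin 2 → ℤ) × (Fin 2 → ℤ))} (hS2 : S2.Finite)
    (I : Finset ℤ) (ψ : ℤ → ((Fin 1 → ℤ) × (Fin 1 → ℤ)) → ((Fin 2 → ℤ) × (Fin 2 → ℤ)))
    (key : ((Fin 2 → ℤ) × (Fin 2 → ℤ)) → ℤ)
    (hmem : ∀ c ∈ I, ∀ x ∈ S1, ψ c x ∈ S2)
    (hkey : ∀ c ∈ I, ∀ x ∈ S1, key (ψ c x) = c)
    (hinj : ∀ c ∈ I, Set.InjOn (ψ c) S1) :
    I.card * S1.ncard ≤ S2.ncard := by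
  classical
  rw [Set.ncard_eq_toFinset_card _ hS1, Set.ncard_eq_toFinset_card _ hS2]
  have hdisj : ∀ c ∈ I, ∀ c' ∈ I, c ≠ c' →
      Disjoint (hS1.toFinset.image (ψ c)) (hS1.toFinset.image (ψ c')) := by
    intro c hc c' hc' hne
    rw [Finset.disjoint_left]
    intro a ha ha'
    simp only [Finset.mem_image, Set.Finite.mem_toFinset] at ha ha'
    obtain ⟨x, hx, rfl⟩ := ha
    obtain ⟨y, hy, hyx⟩ := ha'
    apply hne
    rw [← hkey c hc x hx, ← hkey c' hc' y hy, hyx]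
  calc I.card * hS1.toFinset.card = ∑ c ∈ I, (hS1.toFinset.image (ψ c)).card := by
        rw [Finset.sum_congr rfl fun c hc => Finset.card_image_of_injOn ?_,
          Finset.sum_const, smul_eq_mul]
        rw [Set.Finite.coe_toFinset]
        exact hinj c hc
    _ = (I.biUnion fun c => hS1.toFinset.image (ψ c)).card := (Finset.card_biUnion hdisj).symm
    _ ≤ hS2.toFinset.card := by
        apply Finset.card_le_card
        intro a ha
        simp only [Finset.mem_biUnion, Finset.mem_image, Set.Finite.mem_toFinset] at ha ⊢
        obtain ⟨c, hc, x, hx, rfl⟩ := ha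
        exact hmem c hc x hx
lemma one_dim_v {n k : ℕ} {p v : Fin 1 → ℤ} (h : IsCanonLine n k 1 p v) :
    v = fun _ => 1 := by
  obtain ⟨-, ⟨j, hj1, -⟩, -⟩ := h
  funext j'
  rw [Subsingleton.elim j' j, hj1]

lemma one_dim_shape {k n : ℕ} {w : Fin k → α} {G : (Fin 1 → ℤ) → α}
    {x : (Fin 1 → ℤ) × (Fin 1 → ℤ)} (hx : x ∈ lineSet n 1 w G) :
    x = ((fun _ => x.1 0), (fun _ => 1)) := by
  have hv := one_dim_v hx.1
  obtain ⟨p, v⟩ := x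
  simp only [Prod.mk.injEq]
  refine ⟨funext fun j => by rw [Subsingleton.elim j 0], hv⟩

lemma mem_lineSet1_iff {k n' : ℕ} {w : Fin k → α} {t : ℤ} {H : (Fin 1 → ℤ) → α} :
    ((fun _ => t), (fun _ => 1)) ∈ lineSet n' 1 w H ↔
      ((∀ i : ℕ, i < k → 1 ≤ t + i ∧ t + i ≤ n') ∧
       ((∀ i : Fin k, H (fun _ => t + ((i : ℕ) : ℤ)) = w i) ∨
        (∀ i : Fin k, H (fun _ => t + ((i : ℕ) : ℤ)) = w i.rev))) := by
  have harg : ∀ i : ℕ,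
      (fun (j : Fin 1) => (fun _ : Fin 1 => t) j + (i : ℤ) * (fun _ : Fin 1 => (1:ℤ)) j) =
      (fun _ : Fin 1 => t + (i:ℤ)) := by
    intro i; funext j; simp
  constructor
  · rintro ⟨⟨-, -, hpt⟩, hl⟩
    refine ⟨fun i hi => by simpa using hpt i hi 0, ?_⟩
    rcases hl with hl | hl
    · exact Or.inl fun i => by rw [← harg (i : ℕ)]; exact hl i
    · exact Or.inr fun i => by rw [← harg (i : ℕ)]; exact hl i
  · rintro ⟨hc, hl⟩
    refine ⟨⟨fun j => Or.inr (Or.inr rfl),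
      ⟨0, rfl, fun j' hj' => absurd hj' (by simp [Fin.lt_def, Subsingleton.elim j' 0])⟩,
      fun i hi j => by simpa using hc i hi⟩, ?_⟩
    rcases hl with hl | hl
    · exact Or.inl fun i => by rw [harg (i : ℕ)]; exact hl i
    · exact Or.inr fun i => by rw [harg (i : ℕ)]; exact hl i

lemma pair1_ext {x y : (Fin 1 → ℤ) × (Fin 1 → ℤ)} (h1 : x.1 0 = y.1 0)
    (h2 : x.2 0 = y.2 0) : x = y := by
  obtain ⟨a, b⟩ := x
  obtain ⟨c, d⟩ := y
  simp only at h1 h2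
  simp only [Prod.mk.injEq]
  constructor <;> funext j <;> rw [Subsingleton.elim j 0] <;> assumption

lemma dir_classify {n k : ℕ} {p v : Fin 2 → ℤ} (h : IsCanonLine n k 2 p v) :
    v = ![1, 0] ∨ v = ![0, 1] ∨ v = ![1, 1] ∨ v = ![1, -1] := by
  obtain ⟨hv, ⟨j, hj1, hj0⟩, -⟩ := h
  have h1 := hv 1
  fin_cases j
  · have h0 : v 0 = 1 := hj1
    rcases h1 with h | h | h
    · right; right; right; funext j'; fin_cases j' <;> simp [h0, h]
    · left; funext j'; fin_cases j' <;> simp [h0, h]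
    · right; right; left; funext j'; fin_cases j' <;> simp [h0, h]
  · have h1' : v 1 = 1 := hj1
    have h0 : v 0 = 0 := hj0 0 (by decide)
    right; left; funext j'; fin_cases j' <;> simp [h1', h0]

lemma sum_reindex_le {k n : ℕ} (g : ℕ → ℕ) (A : Finset ℤ) (e : ℤ → ℕ)
    (hinj : ∀ c ∈ A, ∀ c' ∈ A, e c = e c' → c = c')
    (hmaps : ∀ c ∈ A, e c ∈ Finset.Icc k n) :
    ∑ c ∈ A, g (e c) ≤ ∑ i ∈ Finset.Icc k n, g i := by
  classical
  rw [← Finset.sum_image hinj]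
  apply Finset.sum_le_sum_of_subset
  intro i hi
  simp only [Finset.mem_image] at hi
  obtain ⟨c, hc, rfl⟩ := hi
  exact hmaps c hc

lemma split_sum_le {k n : ℕ} (hn : k ≤ n) (g : ℕ → ℕ) (A B C : Finset ℤ)
    (hsub : A ⊆ B ∪ C) (hdisj : Disjoint B C) (e : ℤ → ℕ)
    (hB : ∑ c ∈ B, g (e c) ≤ ∑ i ∈ Finset.Icc k n, g i)
    (hC : ∑ c ∈ C, g (e c) ≤ ∑ i ∈ Finset.Icc k n, g i) :
    ∑ c ∈ A, g (e c) ≤ 2 * ∑ i ∈ Finset.Icc k n, g i := by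
  classical
  calc ∑ c ∈ A, g (e c) ≤ ∑ c ∈ B ∪ C, g (e c) := Finset.sum_le_sum_of_subset hsub
    _ = ∑ c ∈ B, g (e c) + ∑ c ∈ C, g (e c) := Finset.sum_union hdisj
    _ ≤ 2 * ∑ i ∈ Finset.Icc k n, g i := by omega
lemma mem_lineSet2_mk {k n : ℕ} (hk : 0 < k) {w : Fin k → α} {G1 : (Fin 1 → ℤ) → α}
    {y b t : ℤ} (hb : b = -1 ∨ b = 0 ∨ b = 1)
    (hcoordx : ∀ i : ℕ, i < k → 1 ≤ t + i ∧ t + i ≤ n)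
    (hcoordy : ∀ i : ℕ, i < k → 1 ≤ y + i * b ∧ y + i * b ≤ n)
    (hl : (∀ i : Fin k, G1 (fun _ => t + ((i : ℕ) : ℤ)) = w i) ∨
          (∀ i : Fin k, G1 (fun _ => t + ((i : ℕ) : ℤ)) = w i.rev)) :
    ((![t, y], ![1, b])) ∈ lineSet n 2 w (fun q => G1 (fun _ => q 0)) := by
  have harg : ∀ i : ℕ,
      (fun _ : Fin 1 => (fun j : Fin 2 => ![t, y] j + (i : ℤ) * ![1, b] j) 0) =
      (fun _ : Fin 1 => t + (i : ℤ)) := by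
    intro i; funext j; simp
  constructor
  · refine ⟨?_, ⟨0, by simp, fun j' hj' => absurd hj' (by simp)⟩, ?_⟩
    · intro j; fin_cases j
      · right; right; simp
      · simpa using hb
    · intro i hi j; fin_cases j
      · simpa using hcoordx i hi
      · simpa using hcoordy i hi
  · rcases hl with hl | hl
    · left; intro i
      have := congrArg G1 (harg (i : ℕ))
      exact this.trans (hl i)
    · right; intro i
      have := congrArg G1 (harg (i : ℕ))
      exact this.trans (hl i)

lemma lower_bound {k n : ℕ} (hk : 2 ≤ k) (hn : k ≤ n) (w : Fin k → α) :
    (Finset.Icc (1 : ℤ) (3 * n - 2 * k + 2)).card * fword w n 1 ≤ fword w n 2 := by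
  have hk0 : 0 < k := by omega
  obtain ⟨G1, hG1⟩ := exists_optimal hk0 w n 1
  rw [← hG1]
  refine le_trans ?_ (count_le_fword hk0 w n 2 (fun q => G1 (fun _ => q 0)))
  rw [count_eq, count_eq]
  apply mul_le_ncard (lineSet_finite hk0 n 1 w G1)
    (lineSet_finite hk0 n 2 w (fun q => G1 (fun _ => q 0))) _
    (fun c x => if c ≤ (n : ℤ) then ((![x.1 0, c], ![1, 0]))
      else if c ≤ 2 * n - k + 1 then ((![x.1 0, c - n], ![1, 1]))
      else ((![x.1 0, c - 2 * n + 2 * k - 2], ![1, -1])))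
    (fun pv => if pv.2 1 = 0 then pv.1 1 else if pv.2 1 = 1 then n + pv.1 1
      else 2 * n - 2 * k + 2 + pv.1 1)
  · -- membership
    intro c hc x hx
    simp only [Finset.mem_Icc] at hc
    have hx' : ((fun _ => x.1 0), (fun _ => (1:ℤ))) ∈ lineSet n 1 w G1 := by
      rw [← one_dim_shape hx]; exact hx
    rw [mem_lineSet1_iff] at hx'
    obtain ⟨hcoord, hl⟩ := hx'
    split_ifs with h1 h2
    · exact mem_lineSet2_mk hk0 (Or.inr (Or.inl rfl)) hcoord
        (fun i hi => by constructor <;> nlinarith [hcoord i hi]) hl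
    · exact mem_lineSet2_mk hk0 (Or.inr (Or.inr rfl)) hcoord
        (fun i hi => by push_cast; constructor <;> nlinarith [hcoord i hi]) hl
    · exact mem_lineSet2_mk hk0 (Or.inl rfl) hcoord
        (fun i hi => by push_cast; constructor <;> nlinarith [hcoord i hi]) hl
  · -- key
    intro c hc x hx
    by_cases h1 : c ≤ (n : ℤ)
    · rw [if_pos h1]
      simp
    · rw [if_neg h1]
      by_cases h2 : c ≤ 2 * n - k + 1
      · rw [if_pos h2]
        simp
      · rw [if_neg h2]
        simp
  · -- injectivity
    intro c hc x hx y hy hxy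
    refine pair1_ext ?_ (by rw [one_dim_v hx.1, one_dim_v hy.1])
    have h0 := congrFun (congrArg Prod.fst hxy) 0
    split_ifs at h0 <;> simpa using h0
lemma isCanon1 {n' k : ℕ} {t : ℤ} (hc : ∀ i : ℕ, i < k → 1 ≤ t + i ∧ t + i ≤ n') :
    IsCanonLine n' k 1 (fun _ => t) (fun _ => 1) :=
  ⟨fun _ => Or.inr (Or.inr rfl),
   ⟨0, rfl, fun j' hj' => absurd hj' (by simp [Fin.lt_def, Subsingleton.elim j' 0])⟩,
   fun i hi j => by simpa using hc i hi⟩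

lemma lineC_mk1 {k : ℕ} {w : Fin k → α} {G : (Fin 2 → ℤ) → α} {p v : Fin 2 → ℤ}
    (hl : lineC 2 w G p v) (H : (Fin 1 → ℤ) → α) (t : ℤ)
    (hH : ∀ i : ℕ, H (fun _ => t + (i : ℤ)) = G (fun j => p j + (i : ℤ) * v j)) :
    lineC 1 w H (fun _ => t) (fun _ => 1) := by
  have harg : ∀ i : ℕ,
      (fun j : Fin 1 => (fun _ : Fin 1 => t) j + (i : ℤ) * (fun _ : Fin 1 => (1:ℤ)) j) =
      (fun _ : Fin 1 => t + (i : ℤ)) := fun i => funext fun j => by simp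
  rcases hl with h | h
  · left; intro i; rw [harg, hH]; exact h i
  · right; intro i; rw [harg, hH]; exact h i

lemma pair2_ext {x y : (Fin 2 → ℤ) × (Fin 2 → ℤ)} (h00 : x.1 0 = y.1 0)
    (h01 : x.1 1 = y.1 1) (h2 : x.2 = y.2) : x = y := by
  obtain ⟨a, b⟩ := x
  obtain ⟨c, d⟩ := y
  simp only at h00 h01 h2
  simp only [Prod.mk.injEq]
  exact ⟨funext fun j => by fin_cases j <;> assumption, h2⟩
lemma horiz_bound {k n : ℕ} (hk : 2 ≤ k) (w : Fin k → α) (G : (Fin 2 → ℤ) → α) :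
    {pv | pv ∈ lineSet n 2 w G ∧ pv.2 = ![1, 0]}.ncard ≤ n * fword w n 1 := by
  have hk0 : 0 < k := by omega
  have hfin : {pv | pv ∈ lineSet n 2 w G ∧ pv.2 = ![1, 0]}.Finite :=
    (lineSet_finite hk0 n 2 w G).subset fun _ h => h.1
  have main : {pv | pv ∈ lineSet n 2 w G ∧ pv.2 = ![1, 0]}.ncard ≤
      ∑ c ∈ Finset.Icc (1 : ℤ) n, count n 1 w (fun q => G ![q 0, c]) := by
    apply ncard_le_sum_counts hk0 _ hfin _ (fun pv => pv.1 1)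
      (fun c pv => ((fun _ => pv.1 0), fun _ => 1)) (fun _ => n) (fun c q => G ![q 0, c])
    · rintro pv ⟨⟨hcanon, -⟩, hveq⟩
      have h := hcanon.2.2 0 hk0 1
      rw [hveq] at h
      simp only [Finset.mem_Icc]
      simp at h
      omega
    · rintro pv ⟨⟨hcanon, hline⟩, hveq⟩
      show ((fun _ => pv.1 0), (fun _ => (1:ℤ))) ∈ lineSet n 1 w (fun q => G ![q 0, pv.1 1])
      refine ⟨isCanon1 ?_, lineC_mk1 hline _ _ ?_⟩
      · intro i hi
        have h := hcanon.2.2 i hi 0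
        rw [hveq] at h
        simp at h
        exact h
      · intro i
        show G ![pv.1 0 + (i:ℤ), pv.1 1] = _
        refine congrArg G ?_
        funext j
        fin_cases j <;> rw [hveq] <;> simp
    · rintro c pv ⟨⟨-, -⟩, hveq⟩ pv' ⟨⟨-, -⟩, hveq'⟩ hkey hkey' hxy
      have h0 := congrFun (congrArg Prod.fst hxy) 0
      simp only at h0
      exact pair2_ext h0 (hkey.trans hkey'.symm) (hveq.trans hveq'.symm)
  refine main.trans ?_
  calc ∑ c ∈ Finset.Icc (1 : ℤ) n, count n 1 w (fun q => G ![q 0, c])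
      ≤ ∑ _c ∈ Finset.Icc (1 : ℤ) n, fword w n 1 :=
        Finset.sum_le_sum fun c _ => count_le_fword hk0 w n 1 _
    _ = n * fword w n 1 := by
        rw [Finset.sum_const, smul_eq_mul, Int.card_Icc]
        have : ((n:ℤ) + 1 - 1).toNat = n := by simp
        rw [this]

lemma vert_bound {k n : ℕ} (hk : 2 ≤ k) (w : Fin k → α) (G : (Fin 2 → ℤ) → α) :
    {pv | pv ∈ lineSet n 2 w G ∧ pv.2 = ![0, 1]}.ncard ≤ n * fword w n 1 := by
  have hk0 : 0 < k := by omega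
  have hfin : {pv | pv ∈ lineSet n 2 w G ∧ pv.2 = ![0, 1]}.Finite :=
    (lineSet_finite hk0 n 2 w G).subset fun _ h => h.1
  have main : {pv | pv ∈ lineSet n 2 w G ∧ pv.2 = ![0, 1]}.ncard ≤
      ∑ c ∈ Finset.Icc (1 : ℤ) n, count n 1 w (fun q => G ![c, q 0]) := by
    apply ncard_le_sum_counts hk0 _ hfin _ (fun pv => pv.1 0)
      (fun c pv => ((fun _ => pv.1 1), fun _ => 1)) (fun _ => n) (fun c q => G ![c, q 0])
    · rintro pv ⟨⟨hcanon, -⟩, hveq⟩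
      have h := hcanon.2.2 0 hk0 0
      rw [hveq] at h
      simp only [Finset.mem_Icc]
      simp at h
      omega
    · rintro pv ⟨⟨hcanon, hline⟩, hveq⟩
      show ((fun _ => pv.1 1), (fun _ => (1:ℤ))) ∈ lineSet n 1 w (fun q => G ![pv.1 0, q 0])
      refine ⟨isCanon1 ?_, lineC_mk1 hline _ _ ?_⟩
      · intro i hi
        have h := hcanon.2.2 i hi 1
        rw [hveq] at h
        simp at h
        exact h
      · intro i
        show G ![pv.1 0, pv.1 1 + (i:ℤ)] = _
        refine congrArg G ?_
        funext j
        fin_cases j <;> rw [hveq] <;> simp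
    · rintro c pv ⟨⟨-, -⟩, hveq⟩ pv' ⟨⟨-, -⟩, hveq'⟩ hkey hkey' hxy
      have h0 := congrFun (congrArg Prod.fst hxy) 0
      simp only at h0
      exact pair2_ext (hkey.trans hkey'.symm) h0 (hveq.trans hveq'.symm)
  refine main.trans ?_
  calc ∑ c ∈ Finset.Icc (1 : ℤ) n, count n 1 w (fun q => G ![c, q 0])
      ≤ ∑ _c ∈ Finset.Icc (1 : ℤ) n, fword w n 1 :=
        Finset.sum_le_sum fun c _ => count_le_fword hk0 w n 1 _
    _ = n * fword w n 1 := by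
        rw [Finset.sum_const, smul_eq_mul, Int.card_Icc]
        have : ((n:ℤ) + 1 - 1).toNat = n := by simp
        rw [this]
lemma diag_bound {k n : ℕ} (hk : 2 ≤ k) (hn : k ≤ n) (w : Fin k → α) (G : (Fin 2 → ℤ) → α) :
    {pv | pv ∈ lineSet n 2 w G ∧ pv.2 = ![1, 1]}.ncard ≤
      2 * ∑ i ∈ Finset.Icc k n, fword w i 1 := by
  have hk0 : 0 < k := by omega
  have hfin : {pv | pv ∈ lineSet n 2 w G ∧ pv.2 = ![1, 1]}.Finite :=
    (lineSet_finite hk0 n 2 w G).subset fun _ h => h.1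
  have main : {pv | pv ∈ lineSet n 2 w G ∧ pv.2 = ![1, 1]}.ncard ≤
      ∑ c ∈ Finset.Icc ((k:ℤ) - n) ((n:ℤ) - k),
        count (n - c.natAbs) 1 w (fun q => G ![q 0 + max c 0, q 0 - min c 0]) := by
    apply ncard_le_sum_counts hk0 _ hfin _ (fun pv => pv.1 0 - pv.1 1)
      (fun c pv => ((fun _ => pv.1 0 - max c 0), fun _ => 1)) (fun c => n - c.natAbs)
      (fun c q => G ![q 0 + max c 0, q 0 - min c 0])
    · rintro pv ⟨⟨hcanon, -⟩, hveq⟩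
      have h0 := hcanon.2.2 0 hk0 0
      have h1 := hcanon.2.2 0 hk0 1
      have h0' := hcanon.2.2 (k-1) (by omega) 0
      have h1' := hcanon.2.2 (k-1) (by omega) 1
      rw [hveq] at h0 h1 h0' h1'
      simp at h0 h1 h0' h1'
      simp only [Finset.mem_Icc]
      omega
    · rintro pv ⟨⟨hcanon, hline⟩, hveq⟩
      show ((fun _ => pv.1 0 - max (pv.1 0 - pv.1 1) 0), (fun _ => (1:ℤ))) ∈
        lineSet (n - (pv.1 0 - pv.1 1).natAbs) 1 w
          (fun q => G ![q 0 + max (pv.1 0 - pv.1 1) 0, q 0 - min (pv.1 0 - pv.1 1) 0])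
      refine ⟨isCanon1 ?_, lineC_mk1 hline _ _ ?_⟩
      · intro i hi
        have h0 := hcanon.2.2 i hi 0
        have h1 := hcanon.2.2 i hi 1
        rw [hveq] at h0 h1
        simp at h0 h1
        show 1 ≤ pv.1 0 - max (pv.1 0 - pv.1 1) 0 + (i:ℤ) ∧
          pv.1 0 - max (pv.1 0 - pv.1 1) 0 + (i:ℤ) ≤ ((n - (pv.1 0 - pv.1 1).natAbs : ℕ) : ℤ)
        omega
      · intro i
        show G ![pv.1 0 - max (pv.1 0 - pv.1 1) 0 + (i:ℤ) + max (pv.1 0 - pv.1 1) 0,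
                 pv.1 0 - max (pv.1 0 - pv.1 1) 0 + (i:ℤ) - min (pv.1 0 - pv.1 1) 0] = _
        refine congrArg G ?_
        funext j
        fin_cases j <;> rw [hveq] <;> simp <;> omega
    · rintro c pv ⟨⟨-, -⟩, hveq⟩ pv' ⟨⟨-, -⟩, hveq'⟩ hkey hkey' hxy
      have h0 := congrFun (congrArg Prod.fst hxy) 0
      simp only at h0 hkey hkey'
      refine pair2_ext (by omega) (by omega) (hveq.trans hveq'.symm)
  refine main.trans ?_
  clear main hfin
  refine (Finset.sum_le_sum fun c _ => count_le_fword hk0 w _ 1 _).trans ?_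
  apply split_sum_le hn (fun i => fword w i 1) _
    (Finset.Icc ((k:ℤ) - n) (-1)) (Finset.Icc 0 ((n:ℤ) - k)) ?_ ?_ (fun c => n - c.natAbs)
  · refine sum_reindex_le (fun i => fword w i 1) _ (fun c => n - c.natAbs) ?_ ?_
    · intro c hc c' hc' h
      simp only [Finset.mem_Icc] at hc hc'
      omega
    · intro c hc
      simp only [Finset.mem_Icc] at hc ⊢
      omega
  · refine sum_reindex_le (fun i => fword w i 1) _ (fun c => n - c.natAbs) ?_ ?_
    · intro c hc c' hc' h
      simp only [Finset.mem_Icc] at hc hc'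
      omega
    · intro c hc
      simp only [Finset.mem_Icc] at hc ⊢
      omega
  · intro c hc
    simp only [Finset.mem_union, Finset.mem_Icc] at hc ⊢
    omega
  · rw [Finset.disjoint_left]
    intro a ha ha'
    simp only [Finset.mem_Icc] at ha ha'
    omega
lemma anti_bound {k n : ℕ} (hk : 2 ≤ k) (hn : k ≤ n) (w : Fin k → α) (G : (Fin 2 → ℤ) → α) :
    {pv | pv ∈ lineSet n 2 w G ∧ pv.2 = ![1, -1]}.ncard ≤
      2 * ∑ i ∈ Finset.Icc k n, fword w i 1 := by
  have hk0 : 0 < k := by omega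
  have hfin : {pv | pv ∈ lineSet n 2 w G ∧ pv.2 = ![1, -1]}.Finite :=
    (lineSet_finite hk0 n 2 w G).subset fun _ h => h.1
  have main : {pv | pv ∈ lineSet n 2 w G ∧ pv.2 = ![1, -1]}.ncard ≤
      ∑ c ∈ Finset.Icc ((k:ℤ) + 1) (2 * (n:ℤ) + 1 - k),
        count ((min (n:ℤ) (c - 1) - max 0 (c - n - 1)).toNat) 1 w
          (fun q => G ![q 0 + max 0 (c - n - 1), c - q 0 - max 0 (c - n - 1)]) := by
    apply ncard_le_sum_counts hk0 _ hfin _ (fun pv => pv.1 0 + pv.1 1)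
      (fun c pv => ((fun _ => pv.1 0 - max 0 (c - n - 1)), fun _ => 1))
      (fun c => (min (n:ℤ) (c - 1) - max 0 (c - n - 1)).toNat)
      (fun c q => G ![q 0 + max 0 (c - n - 1), c - q 0 - max 0 (c - n - 1)])
    · rintro pv ⟨⟨hcanon, -⟩, hveq⟩
      have h0 := hcanon.2.2 0 hk0 0
      have h1 := hcanon.2.2 0 hk0 1
      have h0' := hcanon.2.2 (k-1) (by omega) 0
      have h1' := hcanon.2.2 (k-1) (by omega) 1
      rw [hveq] at h0 h1 h0' h1'
      simp at h0 h1 h0' h1'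
      simp only [Finset.mem_Icc]
      omega
    · rintro pv ⟨⟨hcanon, hline⟩, hveq⟩
      show ((fun _ => pv.1 0 - max 0 (pv.1 0 + pv.1 1 - n - 1)), (fun _ => (1:ℤ))) ∈
        lineSet ((min (n:ℤ) (pv.1 0 + pv.1 1 - 1) - max 0 (pv.1 0 + pv.1 1 - n - 1)).toNat) 1 w
          (fun q => G ![q 0 + max 0 (pv.1 0 + pv.1 1 - n - 1),
            pv.1 0 + pv.1 1 - q 0 - max 0 (pv.1 0 + pv.1 1 - n - 1)])
      refine ⟨isCanon1 ?_, lineC_mk1 hline _ _ ?_⟩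
      · intro i hi
        have h0 := hcanon.2.2 i hi 0
        have h1 := hcanon.2.2 i hi 1
        rw [hveq] at h0 h1
        simp at h0 h1
        show 1 ≤ pv.1 0 - max 0 (pv.1 0 + pv.1 1 - n - 1) + (i:ℤ) ∧
          pv.1 0 - max 0 (pv.1 0 + pv.1 1 - n - 1) + (i:ℤ) ≤
            ((min (n:ℤ) (pv.1 0 + pv.1 1 - 1) - max 0 (pv.1 0 + pv.1 1 - n - 1)).toNat : ℤ)
        omega
      · intro i
        show G ![pv.1 0 - max 0 (pv.1 0 + pv.1 1 - n - 1) + (i:ℤ) + max 0 (pv.1 0 + pv.1 1 - n - 1),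
            pv.1 0 + pv.1 1 - (pv.1 0 - max 0 (pv.1 0 + pv.1 1 - n - 1) + (i:ℤ)) -
              max 0 (pv.1 0 + pv.1 1 - n - 1)] = _
        refine congrArg G ?_
        funext j
        fin_cases j <;> rw [hveq] <;> simp <;> omega
    · rintro c pv ⟨⟨-, -⟩, hveq⟩ pv' ⟨⟨-, -⟩, hveq'⟩ hkey hkey' hxy
      have h0 := congrFun (congrArg Prod.fst hxy) 0
      simp only at h0 hkey hkey'
      refine pair2_ext (by omega) (by omega) (hveq.trans hveq'.symm)
  refine main.trans ?_
  clear main hfin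
  refine (Finset.sum_le_sum fun c _ => count_le_fword hk0 w _ 1 _).trans ?_
  apply split_sum_le hn (fun i => fword w i 1) _
    (Finset.Icc ((k:ℤ) + 1) ((n:ℤ) + 1)) (Finset.Icc ((n:ℤ) + 2) (2 * (n:ℤ) + 1 - k)) ?_ ?_
    (fun c => (min (n:ℤ) (c - 1) - max 0 (c - n - 1)).toNat)
  · refine sum_reindex_le (fun i => fword w i 1) _
      (fun c => (min (n:ℤ) (c - 1) - max 0 (c - n - 1)).toNat) ?_ ?_
    · intro c hc c' hc' h
      simp only [Finset.mem_Icc] at hc hc'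
      omega
    · intro c hc
      simp only [Finset.mem_Icc] at hc ⊢
      omega
  · refine sum_reindex_le (fun i => fword w i 1) _
      (fun c => (min (n:ℤ) (c - 1) - max 0 (c - n - 1)).toNat) ?_ ?_
    · intro c hc c' hc' h
      simp only [Finset.mem_Icc] at hc hc'
      omega
    · intro c hc
      simp only [Finset.mem_Icc] at hc ⊢
      omega
  · intro c hc
    simp only [Finset.mem_union, Finset.mem_Icc] at hc ⊢
    omega
  · rw [Finset.disjoint_left]
    intro a ha ha'
    simp only [Finset.mem_Icc] at ha ha'
    omega
theorem short_word_bounds {k n : ℕ} (hk : 2 ≤ k) (hn : k ≤ n) (w : Fin k → α) :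
    (fword w n 1 : ℤ) * (3 * n - 4 * k) ≤ (fword w n 2 : ℤ) ∧
    fword w n 2 ≤ fword w n 1 * (2 * n) + 4 * ∑ i ∈ Finset.Icc k n, fword w i 1 := by
  have hk0 : 0 < k := by omega
  constructor
  · have hlow := lower_bound hk hn w
    have hc : ((Finset.Icc (1 : ℤ) (3 * n - 2 * k + 2)).card : ℤ) = 3 * (n:ℤ) - 2 * k + 2 := by
      rw [Int.card_Icc]
      omega
    calc (fword w n 1 : ℤ) * (3 * n - 4 * k)
        ≤ (fword w n 1 : ℤ) * (3 * (n:ℤ) - 2 * k + 2) := by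
          refine mul_le_mul_of_nonneg_left (by omega) (Int.natCast_nonneg _)
      _ = ((Finset.Icc (1 : ℤ) (3 * n - 2 * k + 2)).card : ℤ) * fword w n 1 := by
          rw [hc]; ring
      _ ≤ (fword w n 2 : ℤ) := by exact_mod_cast hlow
  · apply fword_le hk0
    intro G
    rw [count_eq]
    have hfin := lineSet_finite hk0 n 2 w G
    have hfs : ∀ (v : Fin 2 → ℤ), {pv | pv ∈ lineSet n 2 w G ∧ pv.2 = v}.Finite :=
      fun v => hfin.subset fun _ h => h.1
    have hsplit : lineSet n 2 w G ⊆
        ({pv | pv ∈ lineSet n 2 w G ∧ pv.2 = ![1, 0]} ∪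
          {pv | pv ∈ lineSet n 2 w G ∧ pv.2 = ![0, 1]}) ∪
        ({pv | pv ∈ lineSet n 2 w G ∧ pv.2 = ![1, 1]} ∪
          {pv | pv ∈ lineSet n 2 w G ∧ pv.2 = ![1, -1]}) := by
      intro pv hpv
      rcases dir_classify hpv.1 with h | h | h | h
      · exact Or.inl (Or.inl ⟨hpv, h⟩)
      · exact Or.inl (Or.inr ⟨hpv, h⟩)
      · exact Or.inr (Or.inl ⟨hpv, h⟩)
      · exact Or.inr (Or.inr ⟨hpv, h⟩)
    calc (lineSet n 2 w G).ncard
        ≤ (({pv | pv ∈ lineSet n 2 w G ∧ pv.2 = ![1, 0]} ∪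
            {pv | pv ∈ lineSet n 2 w G ∧ pv.2 = ![0, 1]}) ∪
           ({pv | pv ∈ lineSet n 2 w G ∧ pv.2 = ![1, 1]} ∪
            {pv | pv ∈ lineSet n 2 w G ∧ pv.2 = ![1, -1]})).ncard :=
          Set.ncard_le_ncard hsplit (((hfs _).union (hfs _)).union ((hfs _).union (hfs _)))
      _ ≤ ({pv | pv ∈ lineSet n 2 w G ∧ pv.2 = ![1, 0]} ∪
            {pv | pv ∈ lineSet n 2 w G ∧ pv.2 = ![0, 1]}).ncard +
          ({pv | pv ∈ lineSet n 2 w G ∧ pv.2 = ![1, 1]} ∪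
            {pv | pv ∈ lineSet n 2 w G ∧ pv.2 = ![1, -1]}).ncard := Set.ncard_union_le _ _
      _ ≤ ({pv | pv ∈ lineSet n 2 w G ∧ pv.2 = ![1, 0]}.ncard +
            {pv | pv ∈ lineSet n 2 w G ∧ pv.2 = ![0, 1]}.ncard) +
          ({pv | pv ∈ lineSet n 2 w G ∧ pv.2 = ![1, 1]}.ncard +
            {pv | pv ∈ lineSet n 2 w G ∧ pv.2 = ![1, -1]}.ncard) :=
          add_le_add (Set.ncard_union_le _ _) (Set.ncard_union_le _ _)
      _ ≤ (n * fword w n 1 + n * fword w n 1) +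
          (2 * ∑ i ∈ Finset.Icc k n, fword w i 1 + 2 * ∑ i ∈ Finset.Icc k n, fword w i 1) :=
          add_le_add (add_le_add (horiz_bound hk w G) (vert_bound hk w G))
            (add_le_add (diag_bound hk hn w G) (anti_bound hk hn w G))
      _ = fword w n 1 * (2 * n) + 4 * ∑ i ∈ Finset.Icc k n, fword w i 1 := by ring


end ShortWordGrid
end
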